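/- arXiv:1902.08916 — 9 statements merged into one kernel-verified Lean document; each statement's English description precedes it below -/
import Mathlib

section
/- Let k > 0, N ≥ 2, 1 ≤ j ≤ N-1 with k² + (j/(2N))² < 1 and k² + (1 - j/(2N))² > 1, and set βₙ = k² + (n + j/(2N))². Let (φₙ)ₙ∈ℤ be a real sequence with ∑ₙ βₙ² φₙ² < ∞, not identically zero, and suppose σ, λ, R, with λ ≥ 0, R > 0, σ + λ + β₀ > 0, satisfy the recurrence 2(1+λ)βₙ(σ + λ + βₙ) φₙ = R k ((βₙ₊₁ - 1) φₙ₊₁ − (βₙ₋₁ - 1) φₙ₋₁) for all n ∈ ℤ. Then ∑ₙ∈ℤ βₙ(σ + λ + βₙ)(βₙ - 1) φₙ² = 0. -/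
theorem stmt_1 (k lam R σ : ℝ) (N j : ℤ) (hk : 0 < k) (hN : 2 ≤ N)
    (hj1 : 1 ≤ j) (hj2 : j ≤ N - 1)
    (h1 : k ^ 2 + ((j : ℝ) / (2 * N)) ^ 2 < 1)
    (h2 : k ^ 2 + (1 - (j : ℝ) / (2 * N)) ^ 2 > 1)
    (β : ℤ → ℝ) (hβ : ∀ n : ℤ, β n = k ^ 2 + ((n : ℝ) + (j : ℝ) / (2 * N)) ^ 2)
    (hlam : 0 ≤ lam) (hR : 0 < R) (hσ : 0 < σ + lam + β 0)
    (φ : ℤ → ℝ) (hsum : Summable (fun n : ℤ => (β n) ^ 2 * (φ n) ^ 2))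
    (hne : φ ≠ 0)
    (hrec : ∀ n : ℤ, 2 * (1 + lam) * β n * (σ + lam + β n) * φ n
      = R * k * ((β (n + 1) - 1) * φ (n + 1) - (β (n - 1) - 1) * φ (n - 1))) :
    ∑' n : ℤ, β n * (σ + lam + β n) * (β n - 1) * (φ n) ^ 2 = 0 := by
  have hk2 : (0:ℝ) < k ^ 2 := by positivity
  have hβk : ∀ n : ℤ, k ^ 2 ≤ β n := by
    intro n; rw [hβ n]; nlinarith [sq_nonneg ((n : ℝ) + (j : ℝ) / (2 * N))]
  set a : ℤ → ℝ := fun n => (β n - 1) * φ n with ha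
  -- summability of φ²
  have hφsum : Summable (fun n : ℤ => (φ n) ^ 2) := by
    apply Summable.of_nonneg_of_le (fun n => sq_nonneg _) (fun n => ?_)
      (hsum.mul_left (1 / k ^ 4))
    have h1 := hβk n
    have hk4 : (0:ℝ) < k ^ 4 := by positivity
    have hb2 : k ^ 4 ≤ (β n) ^ 2 := by
      nlinarith [mul_le_mul h1 h1 hk2.le (hk2.le.trans h1)]
    have hle : k ^ 4 * (φ n) ^ 2 ≤ (β n) ^ 2 * (φ n) ^ 2 :=
      mul_le_mul_of_nonneg_right hb2 (sq_nonneg _)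
    calc (φ n) ^ 2 = (1 / k ^ 4) * (k ^ 4 * (φ n) ^ 2) := by field_simp
      _ ≤ (1 / k ^ 4) * ((β n) ^ 2 * (φ n) ^ 2) := by
          apply mul_le_mul_of_nonneg_left hle; positivity
  -- summability of a²
  have ha2 : Summable (fun n : ℤ => (a n) ^ 2) := by
    apply Summable.of_nonneg_of_le (fun n => sq_nonneg _) (fun n => ?_)
      ((hsum.mul_left 2).add (hφsum.mul_left 2))
    simp only [ha]
    nlinarith [sq_nonneg ((β n + 1) * φ n), sq_nonneg (φ n)]
  have ha2p : Summable (fun n : ℤ => (a (n + 1)) ^ 2) :=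
    ha2.comp_injective (add_left_injective (1:ℤ))
  have ha2m : Summable (fun n : ℤ => (a (n - 1)) ^ 2) :=
    ha2.comp_injective (sub_left_injective (b := (1:ℤ)))
  have habs : ∀ x y : ℝ, |x * y| ≤ (1/2) * (x ^ 2 + y ^ 2) := by
    intro x y
    rw [abs_mul]
    nlinarith [sq_nonneg (|x| - |y|), sq_abs x, sq_abs y, abs_nonneg x, abs_nonneg y]
  have hprod1 : Summable (fun n : ℤ => a n * a (n + 1)) := by
    apply Summable.of_abs
    exact Summable.of_nonneg_of_le (fun n => abs_nonneg _)
      (fun n => habs _ _) ((ha2.add ha2p).mul_left (1/2))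
  have hprod2 : Summable (fun n : ℤ => a n * a (n - 1)) := by
    apply Summable.of_abs
    exact Summable.of_nonneg_of_le (fun n => abs_nonneg _)
      (fun n => habs _ _) ((ha2.add ha2m).mul_left (1/2))
  set c : ℝ := R * k / (2 * (1 + lam)) with hc
  have hl : (0:ℝ) < 2 * (1 + lam) := by linarith
  have key : ∀ n : ℤ, β n * (σ + lam + β n) * (β n - 1) * (φ n) ^ 2
      = c * (a n * a (n + 1)) - c * (a n * a (n - 1)) := by
    intro n
    have h := hrec n
    simp only [ha, hc]
    rw [div_mul_eq_mul_div, div_mul_eq_mul_div, ← sub_div, eq_div_iff hl.ne']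
    linear_combination ((β n - 1) * φ n) * h
  have hT : (∑' n : ℤ, a n * a (n + 1)) = ∑' n : ℤ, a n * a (n - 1) := by
    rw [← (Equiv.addRight (1:ℤ)).tsum_eq (fun n => a n * a (n - 1))]
    simp only [Equiv.coe_addRight, add_sub_cancel_right]
    exact tsum_congr fun n => mul_comm _ _
  calc ∑' n : ℤ, β n * (σ + lam + β n) * (β n - 1) * (φ n) ^ 2
      = ∑' n : ℤ, (c * (a n * a (n + 1)) - c * (a n * a (n - 1))) := tsum_congr key
    _ = (∑' n : ℤ, c * (a n * a (n + 1))) - ∑' n : ℤ, c * (a n * a (n - 1)) :=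
        Summable.tsum_sub (hprod1.mul_left c) (hprod2.mul_left c)
    _ = c * (∑' n : ℤ, a n * a (n + 1)) - c * (∑' n : ℤ, a n * a (n - 1)) := by
        rw [tsum_mul_left, tsum_mul_left]
    _ = 0 := by rw [hT]; ring
end

section
/- Under the hypotheses of the previous identity (β₀ < 1, βₙ > 1 for n ≠ 0, σ + λ + β₀ > 0, and ∑ₙ βₙ(σ+λ+βₙ)(βₙ-1)φₙ² = 0 with φ not identically zero), one has ∑ₙ∈ℤ βₙ(βₙ - 1) φₙ² < 0. -/
theorem stmt_2 (k lam σ : ℝ) (N j : ℤ) (hk : 0 < k) (hN : 2 ≤ N)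
    (hj1 : 1 ≤ j) (hj2 : j ≤ N - 1)
    (β : ℤ → ℝ) (hβ : ∀ n : ℤ, β n = k ^ 2 + ((n : ℝ) + (j : ℝ) / (2 * N)) ^ 2)
    (hβ0 : β 0 < 1) (hβn : ∀ n : ℤ, n ≠ 0 → 1 < β n)
    (hlam : 0 ≤ lam) (hσ : 0 < σ + lam + β 0)
    (φ : ℤ → ℝ) (hne : φ ≠ 0)
    (hsum : Summable (fun n : ℤ => (β n) ^ 2 * (φ n) ^ 2))
    (hsum3 : Summable (fun n : ℤ => β n * (σ + lam + β n) * (β n - 1) * (φ n) ^ 2))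
    (hzero : ∑' n : ℤ, β n * (σ + lam + β n) * (β n - 1) * (φ n) ^ 2 = 0) :
    ∑' n : ℤ, β n * (β n - 1) * (φ n) ^ 2 < 0 := by
  have hβ0pos : 0 < β 0 := by
    rw [hβ 0]
    have : (0:ℝ) < k ^ 2 := by positivity
    nlinarith [sq_nonneg ((0:ℤ) + (j:ℝ) / (2 * N))]
  set c := σ + lam + β 0 with hc
  by_cases h : ∀ n : ℤ, n ≠ 0 → φ n = 0
  · exfalso
    have hφ0 : φ 0 ≠ 0 := by
      intro h0
      apply hne
      funext n
      rcases eq_or_ne n 0 with rfl | hn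
      · exact h0
      · exact h n hn
    have hsingle : ∑' n : ℤ, β n * (σ + lam + β n) * (β n - 1) * (φ n) ^ 2
        = β 0 * (σ + lam + β 0) * (β 0 - 1) * (φ 0) ^ 2 :=
      tsum_eq_single 0 (fun n hn => by simp [h n hn])
    have hφ0sq : 0 < (φ 0) ^ 2 := by positivity
    nlinarith [mul_pos (mul_pos (mul_pos hβ0pos hσ) hφ0sq) (sub_pos.mpr hβ0),
      hzero, hsingle]
  · push_neg at h
    obtain ⟨n₀, hn₀, hφn₀⟩ := h
    -- summability of f n = β n * (β n - 1) * φ n ^ 2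
    have hsumf : Summable (fun n : ℤ => β n * (β n - 1) * (φ n) ^ 2) := by
      apply Summable.of_norm_bounded_eventually (g := fun n : ℤ => (β n) ^ 2 * (φ n) ^ 2) hsum
      have : {n : ℤ | ¬ ‖β n * (β n - 1) * (φ n) ^ 2‖ ≤ (β n) ^ 2 * (φ n) ^ 2} ⊆ {0} := by
        intro n hn
        by_contra hne0
        apply hn
        have h1 : 1 < β n := hβn n (by simpa using hne0)
        have hnn : 0 ≤ β n * (β n - 1) * (φ n) ^ 2 :=
          mul_nonneg (mul_nonneg (by linarith) (by linarith)) (sq_nonneg _)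
        rw [Real.norm_eq_abs, abs_of_nonneg hnn]
        nlinarith [mul_nonneg (by linarith : (0:ℝ) ≤ β n) (sq_nonneg (φ n))]
      exact Filter.eventually_cofinite.mpr (Set.Finite.subset (Set.finite_singleton 0) this)
    have hsumcf : Summable (fun n : ℤ => c * (β n * (β n - 1) * (φ n) ^ 2)) :=
      hsumf.mul_left c
    have hle : ∀ n : ℤ, c * (β n * (β n - 1) * (φ n) ^ 2)
        ≤ β n * (σ + lam + β n) * (β n - 1) * (φ n) ^ 2 := by
      intro n
      rcases eq_or_ne n 0 with rfl | hn
      · rw [hc]; ring_nf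
        exact le_rfl
      · rw [hc]
        have h1 : 1 < β n := hβn n hn
        have hf : 0 ≤ β n * (β n - 1) * (φ n) ^ 2 :=
          mul_nonneg (mul_nonneg (by linarith) (by linarith)) (sq_nonneg _)
        have hd : 0 ≤ β n - β 0 := by linarith
        nlinarith [mul_nonneg hf hd]
    have hlt : c * (β n₀ * (β n₀ - 1) * (φ n₀) ^ 2)
        < β n₀ * (σ + lam + β n₀) * (β n₀ - 1) * (φ n₀) ^ 2 := by
      rw [hc]
      have h1 : 1 < β n₀ := hβn n₀ hn₀
      have hfp : 0 < β n₀ * (β n₀ - 1) * (φ n₀) ^ 2 := by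
        have : 0 < (φ n₀) ^ 2 := by positivity
        exact mul_pos (mul_pos (by linarith) (by linarith)) this
      have hd : 0 < β n₀ - β 0 := by linarith
      nlinarith [mul_pos hfp hd]
    have key : ∑' n : ℤ, c * (β n * (β n - 1) * (φ n) ^ 2)
        < ∑' n : ℤ, β n * (σ + lam + β n) * (β n - 1) * (φ n) ^ 2 :=
      Summable.tsum_lt_tsum hle hlt hsumcf hsum3
    rw [hzero, tsum_mul_left] at key
    by_contra hcon
    push_neg at hcon
    nlinarith [mul_nonneg hσ.le hcon]
end

section
/- Under the same hypotheses (β₀ < 1, βₙ > 1 for n ≠ 0, σ + λ + β₀ > 0, ∑ₙ βₙ(σ+λ+βₙ)(βₙ-1)φₙ² = 0, φ not identically zero), one has ∑ₙ∈ℤ (βₙ - 1) φₙ² < 0. -/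
theorem stmt_3 (k lam σ : ℝ) (N j : ℤ) (hk : 0 < k) (hN : 2 ≤ N)
    (hj1 : 1 ≤ j) (hj2 : j ≤ N - 1)
    (β : ℤ → ℝ) (hβ : ∀ n : ℤ, β n = k ^ 2 + ((n : ℝ) + (j : ℝ) / (2 * N)) ^ 2)
    (hβ0 : β 0 < 1) (hβn : ∀ n : ℤ, n ≠ 0 → 1 < β n)
    (hlam : 0 ≤ lam) (hσ : 0 < σ + lam + β 0)
    (φ : ℤ → ℝ) (hne : φ ≠ 0)
    (hsum : Summable (fun n : ℤ => (β n) ^ 2 * (φ n) ^ 2))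
    (hsum3 : Summable (fun n : ℤ => β n * (σ + lam + β n) * (β n - 1) * (φ n) ^ 2))
    (hzero : ∑' n : ℤ, β n * (σ + lam + β n) * (β n - 1) * (φ n) ^ 2 = 0) :
    ∑' n : ℤ, (β n - 1) * (φ n) ^ 2 < 0 := by
  have hβ0pos : 0 < β 0 := by
    rw [hβ 0]
    nlinarith [pow_pos hk 2, sq_nonneg ((0 : ℝ) + (j : ℝ) / (2 * N))]
  have hβge : ∀ n : ℤ, β 0 ≤ β n := by
    intro n
    rcases eq_or_ne n 0 with rfl | h
    · exact le_refl _
    · linarith [hβn n h]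
  set c : ℝ := β 0 * (σ + lam + β 0) with hc
  have hcpos : 0 < c := mul_pos hβ0pos hσ
  have hsq : Summable (fun n : ℤ => (φ n) ^ 2) := by
    apply Summable.of_nonneg_of_le (fun n => sq_nonneg _) (fun n => ?_)
      (hsum.mul_left (1 / (β 0) ^ 2))
    have h1 : (β 0) ^ 2 ≤ (β n) ^ 2 := pow_le_pow_left₀ hβ0pos.le (hβge n) 2
    rw [one_div, inv_mul_eq_div, le_div_iff₀ (pow_pos hβ0pos 2)]
    nlinarith [sq_nonneg (φ n)]
  have hbsq : Summable (fun n : ℤ => β n * (φ n) ^ 2) := by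
    apply Summable.of_nonneg_of_le
      (fun n => mul_nonneg (lt_of_lt_of_le hβ0pos (hβge n)).le (sq_nonneg _))
      (fun n => ?_) (hsum.mul_left (1 / β 0))
    rw [one_div, inv_mul_eq_div, le_div_iff₀ hβ0pos]
    nlinarith [mul_nonneg (mul_nonneg (sub_nonneg.2 (hβge n))
      (lt_of_lt_of_le hβ0pos (hβge n)).le) (sq_nonneg (φ n))]
  have hf : Summable (fun n : ℤ => (β n - 1) * (φ n) ^ 2) := by
    have := hbsq.sub hsq
    simpa [sub_mul, one_mul] using this
  have hd : Summable (fun n : ℤ =>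
      β n * (σ + lam + β n) * (β n - 1) * (φ n) ^ 2 - c * ((β n - 1) * (φ n) ^ 2)) :=
    hsum3.sub (hf.mul_left c)
  have hterm : ∀ n : ℤ,
      0 ≤ β n * (σ + lam + β n) * (β n - 1) * (φ n) ^ 2 - c * ((β n - 1) * (φ n) ^ 2) := by
    intro n
    rcases eq_or_ne n 0 with rfl | h
    · rw [hc]; ring_nf; exact le_refl _
    · have key : β n * (σ + lam + β n) * (β n - 1) * (φ n) ^ 2 - c * ((β n - 1) * (φ n) ^ 2)
          = (β n - β 0) * (σ + lam + β n + β 0) * ((β n - 1) * (φ n) ^ 2) := by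
        rw [hc]; ring
      rw [key]
      apply mul_nonneg (mul_nonneg (by linarith [hβge n]) (by linarith [hβge n]))
      exact mul_nonneg (by linarith [hβn n h]) (sq_nonneg _)
  have htsum : ∑' n : ℤ,
      (β n * (σ + lam + β n) * (β n - 1) * (φ n) ^ 2 - c * ((β n - 1) * (φ n) ^ 2))
      = - (c * ∑' n : ℤ, (β n - 1) * (φ n) ^ 2) := by
    rw [Summable.tsum_sub hsum3 (hf.mul_left c), hzero, tsum_mul_left]
    ring
  by_cases hcase : ∀ n : ℤ, n ≠ 0 → φ n = 0
  · have h0 : φ 0 ≠ 0 := by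
      intro h
      apply hne
      funext n
      rcases eq_or_ne n 0 with rfl | hn
      · exact h
      · exact hcase n hn
    have hval : ∑' n : ℤ, (β n - 1) * (φ n) ^ 2 = (β 0 - 1) * (φ 0) ^ 2 := by
      apply tsum_eq_single 0
      intro n hn
      rw [hcase n hn]; ring
    have hpos : 0 < (φ 0) ^ 2 :=
      lt_of_le_of_ne (sq_nonneg _) (Ne.symm (pow_ne_zero 2 h0))
    rw [hval]
    nlinarith
  · push_neg at hcase
    obtain ⟨m, hm0, hmφ⟩ := hcase
    have hdm : 0 < β m * (σ + lam + β m) * (β m - 1) * (φ m) ^ 2 - c * ((β m - 1) * (φ m) ^ 2) := by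
      have key : β m * (σ + lam + β m) * (β m - 1) * (φ m) ^ 2 - c * ((β m - 1) * (φ m) ^ 2)
          = (β m - β 0) * (σ + lam + β m + β 0) * ((β m - 1) * (φ m) ^ 2) := by
        rw [hc]; ring
      rw [key]
      have hpos : 0 < (φ m) ^ 2 :=
        lt_of_le_of_ne (sq_nonneg _) (Ne.symm (pow_ne_zero 2 hmφ))
      have h1 := hβn m hm0
      apply mul_pos (mul_pos (by linarith) (by linarith))
      exact mul_pos (by linarith) hpos
    have htpos : 0 < ∑' n : ℤ,
        (β n * (σ + lam + β n) * (β n - 1) * (φ n) ^ 2 - c * ((β n - 1) * (φ n) ^ 2)) :=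
      Summable.tsum_pos hd hterm m hdm
    rw [htsum] at htpos
    nlinarith
end

section
/- Under the same hypotheses, the signed sum ∑ₙ∈ℤ (−1)ⁿ βₙ(βₙ - 1) φₙ² is strictly negative. -/
theorem stmt_4 (k lam σ : ℝ) (N j : ℤ) (hk : 0 < k) (hN : 2 ≤ N)
    (hj1 : 1 ≤ j) (hj2 : j ≤ N - 1)
    (β : ℤ → ℝ) (hβ : ∀ n : ℤ, β n = k ^ 2 + ((n : ℝ) + (j : ℝ) / (2 * N)) ^ 2)
    (hβ0 : β 0 < 1) (hβn : ∀ n : ℤ, n ≠ 0 → 1 < β n)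
    (hlam : 0 ≤ lam) (hσ : 0 < σ + lam + β 0)
    (φ : ℤ → ℝ) (hne : φ ≠ 0)
    (hsum : Summable (fun n : ℤ => (β n) ^ 2 * (φ n) ^ 2))
    (hsum3 : Summable (fun n : ℤ => β n * (σ + lam + β n) * (β n - 1) * (φ n) ^ 2))
    (hzero : ∑' n : ℤ, β n * (σ + lam + β n) * (β n - 1) * (φ n) ^ 2 = 0) :
    ∑' n : ℤ, (-1 : ℝ) ^ n * (β n * (β n - 1) * (φ n) ^ 2) < 0 := by
  set c := σ + lam + β 0 with hc
  have hβpos : ∀ n : ℤ, 0 < β n := by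
    intro n; rw [hβ n]; positivity
  -- there is some m ≠ 0 with φ m ≠ 0
  have hm : ∃ m : ℤ, m ≠ 0 ∧ φ m ≠ 0 := by
    by_contra h
    push_neg at h
    have hT : ∀ n : ℤ, n ≠ 0 →
        β n * (σ + lam + β n) * (β n - 1) * (φ n) ^ 2 = 0 := by
      intro n hn; rw [h n hn]; ring
    have h0 := tsum_eq_single (L := SummationFilter.unconditional ℤ)
      (f := fun n : ℤ => β n * (σ + lam + β n) * (β n - 1) * φ n ^ 2) 0
      (fun n hn => hT n hn)
    rw [hzero] at h0
    have hφ0 : φ 0 = 0 := by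
      by_contra h0'
      have h2 : (0 : ℝ) < (φ 0) ^ 2 := by positivity
      have hb := hβpos 0
      have hσ' : (0 : ℝ) < σ + lam + β 0 := hσ
      nlinarith [mul_pos (mul_pos hb hσ') (mul_pos (show (0:ℝ) < 1 - β 0 by linarith) h2)]
    apply hne
    funext n
    by_cases hn : n = 0
    · rw [hn]; exact hφ0
    · exact h n hn
  obtain ⟨m, hm0, hφm⟩ := hm
  have hcpos : 0 < c := hσ
  -- pointwise bound
  have hle : ∀ n : ℤ, (-1 : ℝ) ^ n * (β n * (β n - 1) * (φ n) ^ 2) ≤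
      β n * (σ + lam + β n) * (β n - 1) * (φ n) ^ 2 / c := by
    intro n
    rw [le_div_iff₀ hcpos]
    by_cases hn : n = 0
    · subst hn
      simp only [zpow_zero, one_mul]
      ring_nf
      nlinarith [sq_nonneg (φ 0)]
    · have hb1 : 1 < β n := hβn n hn
      have hA : 0 ≤ β n * (β n - 1) * (φ n) ^ 2 :=
        mul_nonneg (mul_nonneg (hβpos n).le (by linarith)) (sq_nonneg _)
      have h1 : (-1 : ℝ) ^ n ≤ 1 := by
        rcases Int.even_or_odd n with h | h
        · rw [h.neg_one_zpow]
        · rw [h.neg_one_zpow]; norm_num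
      have hcle : c ≤ σ + lam + β n := by linarith
      nlinarith [mul_le_mul_of_nonneg_right h1 hA,
        mul_le_mul_of_nonneg_left hcle hA]
  -- strict bound at m
  have hlt : (-1 : ℝ) ^ m * (β m * (β m - 1) * (φ m) ^ 2) <
      β m * (σ + lam + β m) * (β m - 1) * (φ m) ^ 2 / c := by
    rw [lt_div_iff₀ hcpos]
    have hb1 : 1 < β m := hβn m hm0
    have hA : 0 < β m * (β m - 1) * (φ m) ^ 2 :=
      mul_pos (mul_pos (hβpos m) (by linarith)) (by positivity)
    have h1 : (-1 : ℝ) ^ m ≤ 1 := by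
      rcases Int.even_or_odd m with h | h
      · rw [h.neg_one_zpow]
      · rw [h.neg_one_zpow]; norm_num
    have hcle : c < σ + lam + β m := by linarith
    nlinarith [mul_le_mul_of_nonneg_right h1 hA.le,
      mul_lt_mul_of_pos_left hcle hA]
  -- summability of the signed series
  have hf : Summable (fun n : ℤ => (-1 : ℝ) ^ n * (β n * (β n - 1) * (φ n) ^ 2)) := by
    apply Summable.of_norm_bounded_eventually (g := fun n => 2 * ((β n) ^ 2 * (φ n) ^ 2))
      (hsum.mul_left 2)
    refine ((Set.finite_singleton (0 : ℤ)).eventually_cofinite_notMem).mono ?_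
    intro n hn
    have hn0 : n ≠ 0 := by simpa using hn
    have hb1 : 1 < β n := hβn n hn0
    have hA : 0 ≤ β n * (β n - 1) * (φ n) ^ 2 :=
      mul_nonneg (mul_nonneg (hβpos n).le (by linarith)) (sq_nonneg _)
    have habs1 : |(-1 : ℝ) ^ n| = 1 := by
      rcases Int.even_or_odd n with h | h
      · simp [h.neg_one_zpow]
      · simp [h.neg_one_zpow]
    have habs : ‖(-1 : ℝ) ^ n * (β n * (β n - 1) * (φ n) ^ 2)‖
        = β n * (β n - 1) * (φ n) ^ 2 := by
      rw [norm_mul, Real.norm_eq_abs, Real.norm_eq_abs, habs1, one_mul,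
        abs_of_nonneg hA]
    rw [habs]
    nlinarith [sq_nonneg (φ n), hβpos n]
  have hg : Summable (fun n : ℤ =>
      β n * (σ + lam + β n) * (β n - 1) * (φ n) ^ 2 / c) := hsum3.div_const c
  have hmain := Summable.tsum_lt_tsum hle hlt hf hg
  have hgsum : ∑' n : ℤ, β n * (σ + lam + β n) * (β n - 1) * (φ n) ^ 2 / c = 0 := by
    rw [tsum_div_const, hzero, zero_div]
  linarith [hmain, hgsum.le, hgsum.ge]
end

section
/- Under the same hypotheses, the signed sum ∑ₙ∈ℤ (−1)ⁿ (βₙ - 1) φₙ² is strictly negative. -/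
lemma neg_one_zpow_cases (n : ℤ) : ((-1 : ℝ)) ^ n = 1 ∨ ((-1 : ℝ)) ^ n = -1 := by
  rcases Int.even_or_odd n with h | h
  · exact Or.inl (Even.neg_one_zpow h)
  · exact Or.inr (Odd.neg_one_zpow h)

theorem stmt_5 (k lam σ : ℝ) (N j : ℤ) (hk : 0 < k) (hN : 2 ≤ N)
    (hj1 : 1 ≤ j) (hj2 : j ≤ N - 1)
    (β : ℤ → ℝ) (hβ : ∀ n : ℤ, β n = k ^ 2 + ((n : ℝ) + (j : ℝ) / (2 * N)) ^ 2)
    (hβ0 : β 0 < 1) (hβn : ∀ n : ℤ, n ≠ 0 → 1 < β n)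
    (hlam : 0 ≤ lam) (hσ : 0 < σ + lam + β 0)
    (φ : ℤ → ℝ) (hne : φ ≠ 0)
    (hsum : Summable (fun n : ℤ => (β n) ^ 2 * (φ n) ^ 2))
    (hsum3 : Summable (fun n : ℤ => β n * (σ + lam + β n) * (β n - 1) * (φ n) ^ 2))
    (hzero : ∑' n : ℤ, β n * (σ + lam + β n) * (β n - 1) * (φ n) ^ 2 = 0) :
    ∑' n : ℤ, (-1 : ℝ) ^ n * ((β n - 1) * (φ n) ^ 2) < 0 := by
  have hβpos : ∀ n : ℤ, 0 < β n := by
    intro n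
    rw [hβ n]
    positivity
  have hw : 0 < β 0 * (σ + lam + β 0) := mul_pos (hβpos 0) hσ
  -- existence of m ≠ 0 with φ m ≠ 0
  have hm : ∃ m : ℤ, m ≠ 0 ∧ φ m ≠ 0 := by
    by_contra h
    push_neg at h
    have hφ0 : φ 0 ≠ 0 := by
      intro h0
      apply hne
      funext n
      by_cases hn : n = 0
      · simpa [hn] using h0
      · exact h n hn
    have hsingle : (∑' n : ℤ, β n * (σ + lam + β n) * (β n - 1) * (φ n) ^ 2)
        = β 0 * (σ + lam + β 0) * (β 0 - 1) * (φ 0) ^ 2 := by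
      apply tsum_eq_single
      intro n hn
      simp [h n hn]
    rw [hzero] at hsingle
    have h2 : 0 < (φ 0) ^ 2 := by positivity
    nlinarith [mul_pos hw h2]
  obtain ⟨m, hm0, hφm⟩ := hm
  have hwn : ∀ n : ℤ, n ≠ 0 →
      β 0 * (σ + lam + β 0) < β n * (σ + lam + β n) := by
    intro n hn
    have h1 : 1 < β n := hβn n hn
    nlinarith [hβpos 0, hσ]
  have hle : ∀ n : ℤ, (-1 : ℝ) ^ n * ((β n - 1) * (φ n) ^ 2)
      ≤ β n * (σ + lam + β n) * (β n - 1) * (φ n) ^ 2 / (β 0 * (σ + lam + β 0)) := by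
    intro n
    rw [le_div_iff₀ hw]
    by_cases hn : n = 0
    · subst hn
      rw [zpow_zero]
      ring_nf
      exact le_refl _
    · have h1 : 1 < β n := hβn n hn
      have ha : 0 ≤ (β n - 1) * (φ n) ^ 2 :=
        mul_nonneg (by linarith) (sq_nonneg _)
      have hwle := le_of_lt (hwn n hn)
      rcases neg_one_zpow_cases n with h | h <;> rw [h] <;> nlinarith [sq_nonneg (φ n)]
  have hstrict : (-1 : ℝ) ^ m * ((β m - 1) * (φ m) ^ 2)
      < β m * (σ + lam + β m) * (β m - 1) * (φ m) ^ 2 / (β 0 * (σ + lam + β 0)) := by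
    rw [lt_div_iff₀ hw]
    have h1 : 1 < β m := hβn m hm0
    have ha : 0 < (β m - 1) * (φ m) ^ 2 :=
      mul_pos (by linarith) (by positivity)
    have hwlt := hwn m hm0
    rcases neg_one_zpow_cases m with h | h <;> rw [h] <;> nlinarith
  have hg_sum : Summable (fun n : ℤ =>
      β n * (σ + lam + β n) * (β n - 1) * (φ n) ^ 2 / (β 0 * (σ + lam + β 0))) :=
    hsum3.div_const _
  have hf_sum : Summable (fun n : ℤ => (-1 : ℝ) ^ n * ((β n - 1) * (φ n) ^ 2)) := by
    apply Summable.of_norm_bounded_eventually hg_sum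
    rw [Filter.eventually_cofinite]
    apply Set.Finite.subset (Set.finite_singleton (0 : ℤ))
    intro n hn
    simp only [Set.mem_setOf_eq, not_le] at hn
    by_contra hn0
    simp only [Set.mem_singleton_iff] at hn0
    apply absurd hn
    push_neg
    have h1 : 1 < β n := hβn n hn0
    have ha : 0 ≤ (β n - 1) * (φ n) ^ 2 :=
      mul_nonneg (by linarith) (sq_nonneg _)
    have habs : ‖(-1 : ℝ) ^ n * ((β n - 1) * (φ n) ^ 2)‖
        = (β n - 1) * (φ n) ^ 2 := by
      rcases neg_one_zpow_cases n with h | h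
      · rw [h, one_mul, Real.norm_eq_abs, abs_of_nonneg ha]
      · rw [h, neg_one_mul, Real.norm_eq_abs, abs_neg, abs_of_nonneg ha]
    rw [habs, le_div_iff₀ hw]
    have hwle := le_of_lt (hwn n hn0)
    nlinarith [sq_nonneg (φ n)]
  have hlt := Summable.tsum_lt_tsum hle hstrict hf_sum hg_sum
  have hgz : (∑' n : ℤ, β n * (σ + lam + β n) * (β n - 1) * (φ n) ^ 2
      / (β 0 * (σ + lam + β 0))) = 0 := by
    rw [tsum_div_const, hzero, zero_div]
  rw [hgz] at hlt
  exact hlt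
end

section
/- Let (φₙ) solve the recurrence 2(1+λ)βₙ(σ(R)+λ+βₙ)φₙ = R k ((βₙ₊₁-1)φₙ₊₁ − (βₙ₋₁-1)φₙ₋₁) for all n ∈ ℤ, where σ(R) and φₙ(R) are differentiable in R. Then the derivative σ'(R) satisfies σ'(R) · ∑ₙ (−1)ⁿ βₙ(βₙ−1)φₙ² = (1/R) ∑ₙ (−1)ⁿ βₙ(σ+λ+βₙ)(βₙ−1)φₙ², assuming all the series converge absolutely and differentiation can be interchanged with summation. -/
open Filter

private lemma aux_fin (t C : ℝ) : {n : ℤ | ((n : ℝ) + t) ^ 2 < C}.Finite := by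
  have hsub : {n : ℤ | ((n : ℝ) + t) ^ 2 < C}
      ⊆ Set.Icc (-(⌈Real.sqrt C + |t|⌉ + 1)) (⌈Real.sqrt C + |t|⌉ + 1) := by
    intro n hn
    simp only [Set.mem_setOf_eq] at hn
    have h1 : |(n : ℝ) + t| ≤ Real.sqrt C := by
      rw [← Real.sqrt_sq_eq_abs]
      exact Real.sqrt_le_sqrt hn.le
    have h2 : |(n : ℝ)| ≤ Real.sqrt C + |t| := by
      calc |(n : ℝ)| = |((n : ℝ) + t) - t| := by ring_nf
        _ ≤ |(n : ℝ) + t| + |t| := abs_sub _ _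
        _ ≤ _ := by linarith
    have h3 : ((|n| : ℤ) : ℝ) ≤ ((⌈Real.sqrt C + |t|⌉ + 1 : ℤ) : ℝ) := by
      have hceil := Int.le_ceil (Real.sqrt C + |t|)
      push_cast
      calc |(n : ℝ)| ≤ Real.sqrt C + |t| := h2
        _ ≤ (⌈Real.sqrt C + |t|⌉ : ℝ) + 1 := by linarith
    have h4 : |n| ≤ ⌈Real.sqrt C + |t|⌉ + 1 := by exact_mod_cast h3
    exact Set.mem_Icc.mpr (abs_le.mp h4)
  exact (Set.finite_Icc _ _).subset hsub

set_option maxHeartbeats 1000000 in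
theorem stmt_7 (k lam R : ℝ) (N j : ℤ) (hk : 0 < k) (hN : 2 ≤ N)
    (hj1 : 1 ≤ j) (hj2 : j ≤ N - 1) (hlam : 0 ≤ lam) (hR : 0 < R)
    (β : ℤ → ℝ) (hβ : ∀ n : ℤ, β n = k ^ 2 + ((n : ℝ) + (j : ℝ) / (2 * N)) ^ 2)
    (σ : ℝ → ℝ) (φ : ℤ → ℝ → ℝ)
    (hσdiff : DifferentiableAt ℝ σ R)
    (hφdiff : ∀ n : ℤ, DifferentiableAt ℝ (φ n) R)
    (hrec : ∀ R' : ℝ, 0 < R' → ∀ n : ℤ,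
      2 * (1 + lam) * β n * (σ R' + lam + β n) * φ n R'
        = R' * k * ((β (n + 1) - 1) * φ (n + 1) R' - (β (n - 1) - 1) * φ (n - 1) R'))
    (hS1 : Summable (fun n : ℤ =>
      (β n) ^ 2 * (σ R + lam + β n) * ((φ n R) ^ 2 + (deriv (φ n) R) ^ 2)))
    (hS2 : Summable (fun n : ℤ => (β n) ^ 2 * (|φ n R| + |deriv (φ n) R|) ^ 2)) :
    deriv σ R * ∑' n : ℤ, (-1 : ℝ) ^ n * (β n * (β n - 1) * (φ n R) ^ 2)
      = (1 / R) * ∑' n : ℤ,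
          (-1 : ℝ) ^ n * (β n * (σ R + lam + β n) * (β n - 1) * (φ n R) ^ 2) := by
  have hbpos : ∀ n : ℤ, 0 < β n := by
    intro n
    have h1 := pow_pos hk 2
    have h2 := sq_nonneg ((n : ℝ) + (j : ℝ) / (2 * N))
    rw [hβ n]; linarith
  -- cofinite largeness of β
  have hfin : ∀ C : ℝ, {n : ℤ | β n < C}.Finite := by
    intro C
    refine (aux_fin ((j : ℝ) / (2 * N)) C).subset ?_
    intro n hn
    simp only [Set.mem_setOf_eq] at hn ⊢
    have h1 := pow_pos hk 2
    rw [hβ n] at hn; linarith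
  have hev : ∀ C : ℝ, ∀ᶠ n : ℤ in cofinite, C ≤ β n := by
    intro C
    rw [Filter.eventually_cofinite]
    refine (hfin C).subset ?_
    intro n hn
    simp only [Set.mem_setOf_eq, not_le] at hn ⊢
    exact hn
  have hev1 : ∀ C : ℝ, ∀ᶠ n : ℤ in cofinite, C ≤ β (n + 1) := by
    intro C
    rw [Filter.eventually_cofinite]
    have heq : {n : ℤ | ¬ C ≤ β (n + 1)} = (fun n : ℤ => n + 1) ⁻¹' {m | β m < C} := by
      ext n; simp [not_le]
    rw [heq]
    exact Set.Finite.preimage (Set.injOn_of_injective (fun a b h => by omega)) (hfin C)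
  have hone : ∀ n : ℤ, |(-1 : ℝ) ^ n| = 1 := by
    intro n
    rcases Int.even_or_odd n with h | h
    · rw [h.neg_one_zpow, abs_one]
    · rw [h.neg_one_zpow]; norm_num
  have hpow : ∀ n : ℤ, (-1 : ℝ) ^ (n - 1) = -(-1 : ℝ) ^ n := by
    intro n
    rw [zpow_sub₀ (by norm_num : (-1 : ℝ) ≠ 0), zpow_one]
    ring
  -- the derivative of the recurrence at R
  have key : ∀ n : ℤ,
      2 * (1 + lam) * β n * deriv σ R * φ n R
        + 2 * (1 + lam) * β n * (σ R + lam + β n) * deriv (φ n) R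
      = 1 * k * ((β (n + 1) - 1) * φ (n + 1) R - (β (n - 1) - 1) * φ (n - 1) R)
        + R * k * ((β (n + 1) - 1) * deriv (φ (n + 1)) R
            - (β (n - 1) - 1) * deriv (φ (n - 1)) R) := by
    intro n
    have hL : HasDerivAt (fun x => 2 * (1 + lam) * β n * (σ x + lam + β n) * φ n x)
        (2 * (1 + lam) * β n * deriv σ R * φ n R
          + 2 * (1 + lam) * β n * (σ R + lam + β n) * deriv (φ n) R) R :=
      (((hσdiff.hasDerivAt.add_const lam).add_const (β n)).const_mul
        (2 * (1 + lam) * β n)).mul (hφdiff n).hasDerivAt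
    have h2 : HasDerivAt
        (fun x => (β (n + 1) - 1) * φ (n + 1) x - (β (n - 1) - 1) * φ (n - 1) x)
        ((β (n + 1) - 1) * deriv (φ (n + 1)) R - (β (n - 1) - 1) * deriv (φ (n - 1)) R) R :=
      ((hφdiff (n + 1)).hasDerivAt.const_mul (β (n + 1) - 1)).sub
        ((hφdiff (n - 1)).hasDerivAt.const_mul (β (n - 1) - 1))
    have hfull : HasDerivAt
        (fun x => x * k * ((β (n + 1) - 1) * φ (n + 1) x - (β (n - 1) - 1) * φ (n - 1) x))
        (1 * k * ((β (n + 1) - 1) * φ (n + 1) R - (β (n - 1) - 1) * φ (n - 1) R)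
          + R * k * ((β (n + 1) - 1) * deriv (φ (n + 1)) R
              - (β (n - 1) - 1) * deriv (φ (n - 1)) R)) R :=
      ((hasDerivAt_id' R).mul_const k).mul h2
    have hEq : (fun x => 2 * (1 + lam) * β n * (σ x + lam + β n) * φ n x)
        =ᶠ[nhds R] (fun x => x * k *
          ((β (n + 1) - 1) * φ (n + 1) x - (β (n - 1) - 1) * φ (n - 1) x)) := by
      filter_upwards [isOpen_Ioi.mem_nhds hR] with x hx
      exact hrec x hx n
    have hd := hEq.deriv_eq
    rw [hL.deriv, hfull.deriv] at hd
    exact hd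
  -- the "flux" function G
  set Gf : ℤ → ℝ := fun m => (-1 : ℝ) ^ m * ((β m - 1) * (β (m + 1) - 1) *
      (φ m R * deriv (φ (m + 1)) R - deriv (φ m) R * φ (m + 1) R)) with hGf
  -- summability facts
  have SA : Summable (fun n : ℤ => (-1 : ℝ) ^ n * (β n * (β n - 1) * (φ n R) ^ 2)) := by
    refine Summable.of_norm_bounded_eventually hS2 ?_
    filter_upwards [hev 1] with n hn
    have h0 := hbpos n
    have h1 : |β n - 1| ≤ β n := abs_le.mpr ⟨by linarith, by linarith⟩
    rw [Real.norm_eq_abs, abs_mul, hone n, one_mul, abs_mul, abs_mul,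
      abs_of_pos h0, abs_of_nonneg (sq_nonneg (φ n R))]
    have hpq : (φ n R) ^ 2 ≤ (|φ n R| + |deriv (φ n) R|) ^ 2 := by
      nlinarith [sq_abs (φ n R), sq_abs (deriv (φ n) R),
        mul_nonneg (abs_nonneg (φ n R)) (abs_nonneg (deriv (φ n) R))]
    nlinarith [mul_le_mul_of_nonneg_left
        (mul_le_mul_of_nonneg_right h1 (sq_nonneg (φ n R))) h0.le,
      mul_le_mul_of_nonneg_left hpq (sq_nonneg (β n))]
  have SB : Summable (fun n : ℤ =>
      (-1 : ℝ) ^ n * (β n * (σ R + lam + β n) * (β n - 1) * (φ n R) ^ 2)) := by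
    refine Summable.of_norm_bounded_eventually hS1 ?_
    filter_upwards [hev (max 1 (-(σ R + lam)))] with n hn
    have h0 := hbpos n
    have hn1 : (1 : ℝ) ≤ β n := le_trans (le_max_left _ _) hn
    have hn2 : -(σ R + lam) ≤ β n := le_trans (le_max_right _ _) hn
    have hs : 0 ≤ σ R + lam + β n := by linarith
    have h1 : |β n - 1| ≤ β n := abs_le.mpr ⟨by linarith, by linarith⟩
    rw [Real.norm_eq_abs, abs_mul, hone n, one_mul, abs_mul, abs_mul, abs_mul,
      abs_of_pos h0, abs_of_nonneg hs, abs_of_nonneg (sq_nonneg (φ n R))]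
    have hA : |β n - 1| * (φ n R) ^ 2 ≤ β n * (φ n R) ^ 2 :=
      mul_le_mul_of_nonneg_right h1 (sq_nonneg (φ n R))
    have hB : (φ n R) ^ 2 ≤ (φ n R) ^ 2 + (deriv (φ n) R) ^ 2 := by
      nlinarith [sq_nonneg (deriv (φ n) R)]
    nlinarith [mul_le_mul_of_nonneg_left hA (mul_nonneg h0.le hs),
      mul_le_mul_of_nonneg_left hB (mul_nonneg (sq_nonneg (β n)) hs)]
  have hS2' : Summable (fun n : ℤ =>
      β (n + 1) ^ 2 * (|φ (n + 1) R| + |deriv (φ (n + 1)) R|) ^ 2) :=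
    ((Equiv.addRight (1 : ℤ)).summable_iff).mpr hS2
  have hg : Summable (fun n : ℤ => (1 / 2) *
      (β n ^ 2 * (|φ n R| + |deriv (φ n) R|) ^ 2
        + β (n + 1) ^ 2 * (|φ (n + 1) R| + |deriv (φ (n + 1)) R|) ^ 2)) :=
    (hS2.add hS2').mul_left (1 / 2)
  have SG : Summable Gf := by
    refine Summable.of_norm_bounded_eventually hg ?_
    filter_upwards [hev 1, hev1 1] with n hn hn1
    have h0 := hbpos n
    have h0' := hbpos (n + 1)
    have h1 : |β n - 1| ≤ β n := abs_le.mpr ⟨by linarith, by linarith⟩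
    have h2 : |β (n + 1) - 1| ≤ β (n + 1) := abs_le.mpr ⟨by linarith, by linarith⟩
    have e1 : |φ n R * deriv (φ (n + 1)) R - deriv (φ n) R * φ (n + 1) R|
        ≤ |φ n R| * |deriv (φ (n + 1)) R| + |deriv (φ n) R| * |φ (n + 1) R| := by
      refine (abs_sub _ _).trans ?_
      rw [abs_mul, abs_mul]
    have step1 : |β n - 1| * |β (n + 1) - 1| *
        |φ n R * deriv (φ (n + 1)) R - deriv (φ n) R * φ (n + 1) R|
        ≤ β n * β (n + 1) *
          (|φ n R| * |deriv (φ (n + 1)) R| + |deriv (φ n) R| * |φ (n + 1) R|) := by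
      have hmm : |β n - 1| * |β (n + 1) - 1| ≤ β n * β (n + 1) :=
        mul_le_mul h1 h2 (abs_nonneg _) h0.le
      calc |β n - 1| * |β (n + 1) - 1| *
            |φ n R * deriv (φ (n + 1)) R - deriv (φ n) R * φ (n + 1) R|
          ≤ β n * β (n + 1) *
            |φ n R * deriv (φ (n + 1)) R - deriv (φ n) R * φ (n + 1) R| :=
            mul_le_mul_of_nonneg_right hmm (abs_nonneg _)
        _ ≤ _ := mul_le_mul_of_nonneg_left e1 (mul_nonneg h0.le h0'.le)
    rw [Real.norm_eq_abs, hGf]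
    simp only
    rw [abs_mul, hone n, one_mul, abs_mul, abs_mul]
    refine step1.trans ?_
    nlinarith [sq_nonneg (β n * |φ n R| - β (n + 1) * |deriv (φ (n + 1)) R|),
      sq_nonneg (β n * |deriv (φ n) R| - β (n + 1) * |φ (n + 1) R|),
      mul_nonneg (mul_nonneg (sq_nonneg (β n)) (abs_nonneg (φ n R)))
        (abs_nonneg (deriv (φ n) R)),
      mul_nonneg (mul_nonneg (sq_nonneg (β (n + 1))) (abs_nonneg (φ (n + 1) R)))
        (abs_nonneg (deriv (φ (n + 1)) R))]
  have SG' : Summable (fun n : ℤ => Gf (n - 1)) :=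
    ((Equiv.subRight (1 : ℤ)).summable_iff).mpr SG
  have htel : ∑' n : ℤ, (Gf n - Gf (n - 1)) = 0 := by
    have h := (Equiv.subRight (1 : ℤ)).tsum_eq Gf
    simp only [Equiv.subRight_apply] at h
    rw [Summable.tsum_sub SG SG', h, sub_self]
  -- termwise identity
  have hT : ∀ n : ℤ,
      2 * (1 + lam) * deriv σ R * ((-1 : ℝ) ^ n * (β n * (β n - 1) * (φ n R) ^ 2))
        - (2 * (1 + lam) / R) *
          ((-1 : ℝ) ^ n * (β n * (σ R + lam + β n) * (β n - 1) * (φ n R) ^ 2))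
      = R * k * (Gf n - Gf (n - 1)) := by
    intro n
    have hkey := key n
    have hr := hrec R hR n
    have h1 : n - 1 + 1 = n := by ring
    have hRR : R * R⁻¹ = 1 := mul_inv_cancel₀ (ne_of_gt hR)
    rw [hGf]
    simp only [h1, hpow]
    linear_combination (-((-1 : ℝ) ^ n * (β n - 1) * (φ n R) * k *
        ((β (n + 1) - 1) * φ (n + 1) R - (β (n - 1) - 1) * φ (n - 1) R))) * hRR
      + ((-1 : ℝ) ^ n * (β n - 1) * (φ n R)) * hkey
      + (-((-1 : ℝ) ^ n * (β n - 1) * (deriv (φ n) R))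
          - ((-1 : ℝ) ^ n * (β n - 1) * (φ n R)) / R) * hr
  -- summation
  have hsum1 : ∑' n : ℤ,
      (2 * (1 + lam) * deriv σ R * ((-1 : ℝ) ^ n * (β n * (β n - 1) * (φ n R) ^ 2))
        - (2 * (1 + lam) / R) *
          ((-1 : ℝ) ^ n * (β n * (σ R + lam + β n) * (β n - 1) * (φ n R) ^ 2)))
      = 2 * (1 + lam) * deriv σ R *
          (∑' n : ℤ, (-1 : ℝ) ^ n * (β n * (β n - 1) * (φ n R) ^ 2))
        - (2 * (1 + lam) / R) *
          (∑' n : ℤ, (-1 : ℝ) ^ n *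
            (β n * (σ R + lam + β n) * (β n - 1) * (φ n R) ^ 2)) := by
    rw [Summable.tsum_sub (SA.mul_left _) (SB.mul_left _), tsum_mul_left, tsum_mul_left]
  have hzero : 2 * (1 + lam) * deriv σ R *
        (∑' n : ℤ, (-1 : ℝ) ^ n * (β n * (β n - 1) * (φ n R) ^ 2))
      - (2 * (1 + lam) / R) *
        (∑' n : ℤ, (-1 : ℝ) ^ n *
          (β n * (σ R + lam + β n) * (β n - 1) * (φ n R) ^ 2)) = 0 := by
    rw [← hsum1]
    calc _ = ∑' n : ℤ, R * k * (Gf n - Gf (n - 1)) := tsum_congr hT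
      _ = R * k * ∑' n : ℤ, (Gf n - Gf (n - 1)) := tsum_mul_left
      _ = 0 := by rw [htel, mul_zero]
  have hc : (0 : ℝ) < 2 * (1 + lam) := by linarith
  have h2 : 2 * (1 + lam) *
      (deriv σ R * (∑' n : ℤ, (-1 : ℝ) ^ n * (β n * (β n - 1) * (φ n R) ^ 2))
        - (1 / R) * (∑' n : ℤ, (-1 : ℝ) ^ n *
          (β n * (σ R + lam + β n) * (β n - 1) * (φ n R) ^ 2))) = 0 := by
    linear_combination hzero
  have h3 := (mul_eq_zero.mp h2).resolve_left (ne_of_gt hc)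
  linarith [h3]
end

section
/- Suppose β₀ < 1, βₙ > 1 for n ≠ 0, σ + λ + β₀ > 0, (φₙ) not identically zero with convergent weighted sums, and ∑ₙ βₙ(σ+λ+βₙ)(βₙ−1)φₙ² = 0. Then ∑ₙ (−1)ⁿ βₙ(σ+λ+βₙ)(βₙ−1)φₙ² < 0. -/
theorem stmt_8 (k lam σ : ℝ) (N j : ℤ) (hk : 0 < k) (hN : 2 ≤ N)
    (hj1 : 1 ≤ j) (hj2 : j ≤ N - 1)
    (β : ℤ → ℝ) (hβ : ∀ n : ℤ, β n = k ^ 2 + ((n : ℝ) + (j : ℝ) / (2 * N)) ^ 2)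
    (hβ0 : β 0 < 1) (hβn : ∀ n : ℤ, n ≠ 0 → 1 < β n)
    (hlam : 0 ≤ lam) (hσ : 0 < σ + lam + β 0)
    (φ : ℤ → ℝ) (hne : φ ≠ 0)
    (hsum : Summable (fun n : ℤ => (β n) ^ 2 * (φ n) ^ 2))
    (hsum3 : Summable (fun n : ℤ => β n * (σ + lam + β n) * (β n - 1) * (φ n) ^ 2))
    (hzero : ∑' n : ℤ, β n * (σ + lam + β n) * (β n - 1) * (φ n) ^ 2 = 0) (R : ℝ) (hR : 0 < R)
    (hrec : ∀ n : ℤ, 2 * (1 + lam) * β n * (σ + lam + β n) * φ n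
      = R * k * ((β (n + 1) - 1) * φ (n + 1) - (β (n - 1) - 1) * φ (n - 1))) :
    ∑' n : ℤ, (-1 : ℝ) ^ n * (β n * (σ + lam + β n) * (β n - 1) * (φ n) ^ 2) < 0 := by
  set f : ℤ → ℝ := fun n => β n * (σ + lam + β n) * (β n - 1) * (φ n) ^ 2 with hf
  have hβpos : ∀ n : ℤ, 0 < β n := by
    intro n; rw [hβ]; positivity
  have hσβ : ∀ n : ℤ, 0 < σ + lam + β n := by
    intro n
    rcases eq_or_ne n 0 with h | h
    · rw [h]; exact hσ
    · have := hβn n h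
      linarith
  have hfnn : ∀ n : ℤ, n ≠ 0 → 0 ≤ f n := by
    intro n hn
    exact mul_nonneg (mul_nonneg (mul_nonneg (hβpos n).le (hσβ n).le)
      (by linarith [hβn n hn])) (sq_nonneg _)
  -- there is an odd index with nonzero φ
  have hodd : ∃ n : ℤ, Odd n ∧ φ n ≠ 0 := by
    by_contra hcon
    push_neg at hcon
    set c : ℤ → ℝ := fun n => (β n - 1) * φ n with hc
    have hRk : R * k ≠ 0 := ne_of_gt (mul_pos hR hk)
    have hstep : ∀ m : ℤ, c (m + 2) = c m := by
      intro m
      rcases Int.even_or_odd m with he | ho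
      · have hom : Odd (m + 1) := he.add_one
        have h0 := hrec (m + 1)
        rw [hcon (m + 1) hom, mul_zero] at h0
        have h1 : (β (m + 1 + 1) - 1) * φ (m + 1 + 1)
            - (β (m + 1 - 1) - 1) * φ (m + 1 - 1) = 0 := by
          rcases mul_eq_zero.mp h0.symm with h | h
          · exact absurd h hRk
          · exact h
        have e1 : m + 1 + 1 = m + 2 := by ring
        have e2 : m + 1 - 1 = m := by ring
        rw [e1, e2] at h1
        simp only [hc]
        linarith
      · have ho2 : Odd (m + 2) := by
          obtain ⟨t, ht⟩ := ho
          exact ⟨t + 1, by omega⟩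
        simp only [hc, hcon m ho, hcon (m + 2) ho2, mul_zero]
    have hconst : ∀ t : ℤ, c (2 * t) = c 0 := by
      intro t
      induction t using Int.induction_on with
      | zero => norm_num
      | succ i ih =>
        have := hstep (2 * i)
        rw [show 2 * ((i : ℤ) + 1) = 2 * i + 2 by ring, this, ih]
      | pred i ih =>
        have := hstep (2 * (-(i : ℤ) - 1))
        rw [show 2 * (-(i : ℤ) - 1) + 2 = 2 * (-(i : ℤ)) by ring] at this
        rw [show (2 : ℤ) * (-(i : ℤ) - 1) = 2 * (-(i : ℤ) - 1) by ring, ← this, ih]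
    have hc0 : c 0 = 0 := by
      by_contra hc0
      have hpos : 0 < c 0 ^ 2 := by positivity
      have htend := hsum.tendsto_cofinite_zero
      have hev : ∀ᶠ n in Filter.cofinite, β n ^ 2 * φ n ^ 2 < c 0 ^ 2 :=
        htend.eventually (gt_mem_nhds hpos)
      have hfin : {n : ℤ | ¬ β n ^ 2 * φ n ^ 2 < c 0 ^ 2}.Finite := hev
      have hsub : ∀ t : ℕ, (2 * ((t : ℤ) + 1)) ∈ {n : ℤ | ¬ β n ^ 2 * φ n ^ 2 < c 0 ^ 2} := by
        intro t
        have hm : (2 * ((t : ℤ) + 1)) ≠ 0 := by omega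
        have hb := hβn _ hm
        have hcm : c (2 * ((t : ℤ) + 1)) = c 0 := hconst _
        simp only [Set.mem_setOf_eq, not_lt]
        calc c 0 ^ 2 = c (2 * ((t : ℤ) + 1)) ^ 2 := by rw [hcm]
          _ ≤ β (2 * ((t : ℤ) + 1)) ^ 2 * φ (2 * ((t : ℤ) + 1)) ^ 2 := by
              simp only [hc, mul_pow]
              have := sq_nonneg (φ (2 * ((t : ℤ) + 1)))
              nlinarith
      have hinf : {n : ℤ | ¬ β n ^ 2 * φ n ^ 2 < c 0 ^ 2}.Infinite :=
        Set.infinite_of_injective_forall_mem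
          (f := fun t : ℕ => 2 * ((t : ℤ) + 1))
          (by intro a b hab
              have h' : 2 * ((a : ℤ) + 1) = 2 * ((b : ℤ) + 1) := hab
              omega) hsub
      exact hinf hfin
    have hφeven : ∀ n : ℤ, n ≠ 0 → Even n → φ n = 0 := by
      intro n hn hen
      obtain ⟨t, ht⟩ := hen
      have hcn : c n = 0 := by
        rw [ht, show t + t = 2 * t by ring, hconst t, hc0]
      have hb := hβn n hn
      rcases mul_eq_zero.mp hcn with h1 | h1
      · linarith
      · exact h1
    have hφ0 : φ 0 = 0 := by
      have h0 := hrec 0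
      have h1 : φ (0 + 1) = 0 := hcon _ ⟨0, by ring⟩
      have h2 : φ (0 - 1) = 0 := hcon _ ⟨-1, by ring⟩
      rw [h1, h2] at h0
      have h0' : 2 * (1 + lam) * β 0 * (σ + lam + β 0) * φ 0 = 0 := by
        rw [h0]; ring
      have hcoef : 0 < 2 * (1 + lam) * β 0 * (σ + lam + β 0) := by
        have h3 : (0 : ℝ) < 2 * (1 + lam) := by linarith
        exact mul_pos (mul_pos h3 (hβpos 0)) hσ
      rcases mul_eq_zero.mp h0' with h | h
      · linarith
      · exact h
    apply hne
    funext n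
    rcases Int.even_or_odd n with he | ho
    · rcases eq_or_ne n 0 with rfl | hn
      · exact hφ0
      · exact hφeven n hn he
    · exact hcon n ho
  obtain ⟨n₀, hn₀odd, hn₀⟩ := hodd
  have hn₀ne : n₀ ≠ 0 := by
    rintro rfl
    exact (Int.not_odd_iff_even.mpr Even.zero) hn₀odd
  have hfpos : 0 < f n₀ := by
    have h1 := hβpos n₀
    have h2 := hσβ n₀
    have h3 := hβn n₀ hn₀ne
    have h4 : 0 < φ n₀ ^ 2 := by positivity
    have := mul_pos (mul_pos (mul_pos h1 h2) (by linarith : (0:ℝ) < β n₀ - 1)) h4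
    exact this
  have hle : ∀ n : ℤ, (-1 : ℝ) ^ n * f n ≤ f n := by
    intro n
    rcases Int.even_or_odd n with he | ho
    · rw [he.neg_one_zpow, one_mul]
    · have hne0 : n ≠ 0 := by
        rintro rfl
        exact (Int.not_odd_iff_even.mpr Even.zero) ho
      rw [ho.neg_one_zpow]
      have := hfnn n hne0
      linarith
  have hlt : (-1 : ℝ) ^ n₀ * f n₀ < f n₀ := by
    rw [hn₀odd.neg_one_zpow]
    linarith
  have hg : Summable (fun n : ℤ => (-1 : ℝ) ^ n * f n) := by
    rw [← summable_abs_iff]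
    have heq : (fun n : ℤ => |(-1 : ℝ) ^ n * f n|) = fun n : ℤ => |f n| := by
      funext n
      rw [abs_mul]
      have h1 : |(-1 : ℝ) ^ n| = 1 := by
        rcases Int.even_or_odd n with he | ho
        · rw [he.neg_one_zpow, abs_one]
        · rw [ho.neg_one_zpow, abs_neg, abs_one]
      rw [h1, one_mul]
    rw [heq, summable_abs_iff]
    exact hsum3
  have hmain := Summable.tsum_lt_tsum hle hlt hg hsum3
  rw [hzero] at hmain
  exact hmain
end

section
/- Let ψ* = e^{ikx} ∑ₙ iⁿ φₙ* sin((n + j/(2N)) y). Then (Δ+1)[cos(y) ∂ₓψ*] = (k/2) e^{ikx} ∑ₙ iⁿ (βₙ−1)(φₙ₊₁* − φₙ₋₁*) sin((n + j/(2N)) y), with βₙ = k² + (n + j/(2N))². -/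
noncomputable def cdx (f : ℝ × ℝ → ℂ) (p : ℝ × ℝ) : ℂ := fderiv ℝ f p (1, 0)
noncomputable def cdy (f : ℝ × ℝ → ℂ) (p : ℝ × ℝ) : ℂ := fderiv ℝ f p (0, 1)
noncomputable def clap (f : ℝ × ℝ → ℂ) : ℝ × ℝ → ℂ :=
  fun p => cdx (cdx f) p + cdy (cdy f) p

open Complex

noncomputable def wv (a : ℝ) (n : ℤ) : ℝ := (n : ℝ) + a

noncomputable def tm (k a : ℝ) (c d : ℤ → ℂ) (n : ℤ) (p : ℝ × ℝ) : ℂ :=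
  Complex.exp (Complex.I * k * p.1) *
    (c n * (Real.sin (wv a n * p.2) : ℂ) + d n * (Real.cos (wv a n * p.2) : ℂ))

noncomputable def tm' (k a : ℝ) (c d : ℤ → ℂ) (n : ℤ) (p : ℝ × ℝ) : ℝ × ℝ →L[ℝ] ℂ :=
  (ContinuousLinearMap.fst ℝ ℝ ℝ).smulRight (Complex.I * k * tm k a c d n p) +
  (ContinuousLinearMap.snd ℝ ℝ ℝ).smulRight (Complex.exp (Complex.I * k * p.1) *
    ((wv a n : ℂ) * c n * (Real.cos (wv a n * p.2) : ℂ)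
      - (wv a n : ℂ) * d n * (Real.sin (wv a n * p.2) : ℂ)))

lemma tm_hasFDerivAt (k a : ℝ) (c d : ℤ → ℂ) (n : ℤ) (p : ℝ × ℝ) :
    HasFDerivAt (tm k a c d n) (tm' k a c d n p) p := by
  have hA : ∀ x : ℝ, HasDerivAt (fun x : ℝ => Complex.exp (Complex.I * k * x))
      (Complex.I * k * Complex.exp (Complex.I * k * x)) x := by
    intro x
    have h1 : HasDerivAt (fun x : ℝ => (x : ℂ)) 1 x := Complex.ofRealCLM.hasDerivAt
    have h2 := (h1.const_mul (Complex.I * k)).cexp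
    simpa [mul_comm] using h2
  have hB : ∀ y : ℝ, HasDerivAt (fun y : ℝ =>
        c n * (Real.sin (wv a n * y) : ℂ) + d n * (Real.cos (wv a n * y) : ℂ))
      ((wv a n : ℂ) * c n * (Real.cos (wv a n * y) : ℂ)
        - (wv a n : ℂ) * d n * (Real.sin (wv a n * y) : ℂ)) y := by
    intro y
    have hl : HasDerivAt (fun y : ℝ => wv a n * y) (wv a n) y := by
      simpa using (hasDerivAt_id y).const_mul (wv a n)
    have hs : HasDerivAt (fun y : ℝ => Real.sin (wv a n * y)) (Real.cos (wv a n * y) * wv a n) y :=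
      (Real.hasDerivAt_sin (wv a n * y)).comp y hl
    have hc : HasDerivAt (fun y : ℝ => Real.cos (wv a n * y)) (-Real.sin (wv a n * y) * wv a n) y :=
      (Real.hasDerivAt_cos (wv a n * y)).comp y hl
    have := ((hs.ofReal_comp.const_mul (c n)).add (hc.ofReal_comp.const_mul (d n)))
    refine this.congr_deriv ?_
    push_cast
    ring
  have hAp : HasFDerivAt (fun p : ℝ × ℝ => Complex.exp (Complex.I * k * p.1))
      (((1 : ℝ →L[ℝ] ℝ).smulRight (Complex.I * k * Complex.exp (Complex.I * k * p.1))).comp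
        (ContinuousLinearMap.fst ℝ ℝ ℝ)) p :=
    ((hA p.1).hasFDerivAt).comp p hasFDerivAt_fst
  have hBp : HasFDerivAt (fun p : ℝ × ℝ =>
        c n * (Real.sin (wv a n * p.2) : ℂ) + d n * (Real.cos (wv a n * p.2) : ℂ))
      (((1 : ℝ →L[ℝ] ℝ).smulRight ((wv a n : ℂ) * c n * (Real.cos (wv a n * p.2) : ℂ)
        - (wv a n : ℂ) * d n * (Real.sin (wv a n * p.2) : ℂ))).comp
        (ContinuousLinearMap.snd ℝ ℝ ℝ)) p :=
    ((hB p.2).hasFDerivAt).comp p hasFDerivAt_snd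
  have hmul := hAp.mul hBp
  have hmul2 : HasFDerivAt (tm k a c d n) _ p := hmul
  refine hmul2.congr_fderiv ?_
  apply ContinuousLinearMap.ext
  intro v
  simp only [tm', tm, ContinuousLinearMap.add_apply, ContinuousLinearMap.coe_comp',
      Function.comp_apply, ContinuousLinearMap.smulRight_apply, ContinuousLinearMap.coe_fst',
      ContinuousLinearMap.coe_snd', ContinuousLinearMap.one_apply, smul_eq_mul,
      Complex.real_smul, ContinuousLinearMap.coe_smul', Pi.smul_apply]
  push_cast
  ring

lemma norm_exp_Ik (k x : ℝ) : ‖Complex.exp (Complex.I * k * x)‖ = 1 := by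
  have : Complex.I * k * x = (((k * x : ℝ)) : ℂ) * Complex.I := by push_cast; ring
  rw [this]
  simpa using Complex.norm_exp_ofReal_mul_I (k * x)

lemma norm_tm_le (k a : ℝ) (c d : ℤ → ℂ) (n : ℤ) (p : ℝ × ℝ) :
    ‖tm k a c d n p‖ ≤ ‖c n‖ + ‖d n‖ := by
  rw [tm, norm_mul, norm_exp_Ik, one_mul]
  refine (norm_add_le _ _).trans (add_le_add ?_ ?_) <;> rw [norm_mul]
  · exact mul_le_of_le_one_right (norm_nonneg _)
      (by rw [Complex.norm_real]; exact Real.abs_sin_le_one _)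
  · exact mul_le_of_le_one_right (norm_nonneg _)
      (by rw [Complex.norm_real]; exact Real.abs_cos_le_one _)

lemma norm_tm'_le (k a : ℝ) (c d : ℤ → ℂ) (n : ℤ) (p : ℝ × ℝ) :
    ‖tm' k a c d n p‖ ≤ (|k| + |wv a n|) * (‖c n‖ + ‖d n‖) := by
  rw [tm']
  refine (norm_add_le _ _).trans ?_
  rw [ContinuousLinearMap.norm_smulRight_apply, ContinuousLinearMap.norm_smulRight_apply]
  have e1 : ‖Complex.I * k * tm k a c d n p‖ ≤ |k| * (‖c n‖ + ‖d n‖) := by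
    rw [norm_mul, norm_mul, Complex.norm_I, one_mul, Complex.norm_real, Real.norm_eq_abs]
    exact mul_le_mul_of_nonneg_left (norm_tm_le k a c d n p) (abs_nonneg k)
  have e2 : ‖Complex.exp (Complex.I * k * p.1) *
      ((wv a n : ℂ) * c n * (Real.cos (wv a n * p.2) : ℂ)
        - (wv a n : ℂ) * d n * (Real.sin (wv a n * p.2) : ℂ))‖
      ≤ |wv a n| * (‖c n‖ + ‖d n‖) := by
    rw [norm_mul, norm_exp_Ik, one_mul]
    refine (norm_sub_le _ _).trans ?_
    rw [mul_add]
    refine add_le_add ?_ ?_ <;> rw [norm_mul, norm_mul, Complex.norm_real, Real.norm_eq_abs]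
    · refine mul_le_of_le_one_right (by positivity) ?_ |>.trans ?_
      · rw [Complex.norm_real]; exact Real.abs_cos_le_one _
      · exact le_refl _ |>.trans (by nlinarith [norm_nonneg (c n), abs_nonneg (wv a n), norm_nonneg (d n)])
    · refine mul_le_of_le_one_right (by positivity) ?_ |>.trans ?_
      · rw [Complex.norm_real]; exact Real.abs_sin_le_one _
      · exact le_refl _ |>.trans (by nlinarith [norm_nonneg (d n), abs_nonneg (wv a n), norm_nonneg (c n)])
  calc ‖ContinuousLinearMap.fst ℝ ℝ ℝ‖ * ‖Complex.I * ↑k * tm k a c d n p‖ +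
        ‖ContinuousLinearMap.snd ℝ ℝ ℝ‖ * ‖_‖
      ≤ 1 * (|k| * (‖c n‖ + ‖d n‖)) + 1 * (|wv a n| * (‖c n‖ + ‖d n‖)) := by
        gcongr <;> first | exact e1 | exact e2 | exact ContinuousLinearMap.norm_fst_le .. | exact ContinuousLinearMap.norm_snd_le ..
    _ = (|k| + |wv a n|) * (‖c n‖ + ‖d n‖) := by ring


noncomputable def GG (k a : ℝ) (c d : ℤ → ℂ) (p : ℝ × ℝ) : ℂ := ∑' n, tm k a c d n p

lemma w_le (a : ℝ) (n : ℤ) : |wv a n| ≤ 1 + wv a n ^ 2 := by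
  nlinarith [_root_.sq_abs (wv a n), abs_nonneg (wv a n), sq_nonneg (|wv a n| - 1)]

lemma norm_tm'_le' (k a : ℝ) (c d : ℤ → ℂ) (n : ℤ) (p : ℝ × ℝ) :
    ‖tm' k a c d n p‖ ≤ (|k| + 1) * ((1 + wv a n ^ 2) * (‖c n‖ + ‖d n‖)) := by
  refine (norm_tm'_le k a c d n p).trans ?_
  have h1 : |wv a n| ≤ 1 + wv a n ^ 2 := w_le a n
  have h2 : (0:ℝ) ≤ ‖c n‖ + ‖d n‖ := by positivity
  rw [← mul_assoc]
  refine mul_le_mul ?_ le_rfl h2 (by positivity)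
  nlinarith [abs_nonneg k, sq_nonneg (wv a n), mul_nonneg (abs_nonneg k) (sq_nonneg (wv a n))]

lemma sm0 (k a : ℝ) (c d : ℤ → ℂ)
    (h1 : Summable (fun n => (1 + wv a n ^ 2) * (‖c n‖ + ‖d n‖))) :
    Summable (fun n => ‖c n‖ + ‖d n‖) := by
  refine h1.of_nonneg_of_le (fun n => by positivity) (fun n => ?_)
  nlinarith [sq_nonneg (wv a n), norm_nonneg (c n), norm_nonneg (d n)]

lemma tm_summable (k a : ℝ) (c d : ℤ → ℂ)
    (h : Summable (fun n => ‖c n‖ + ‖d n‖)) (p : ℝ × ℝ) :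
    Summable (fun n => tm k a c d n p) :=
  Summable.of_norm_bounded h (fun n => norm_tm_le k a c d n p)

lemma GG_hasFDerivAt (k a : ℝ) (c d : ℤ → ℂ)
    (h1 : Summable (fun n => (1 + wv a n ^ 2) * (‖c n‖ + ‖d n‖))) (p : ℝ × ℝ) :
    HasFDerivAt (GG k a c d) (∑' n, tm' k a c d n p) p := by
  have hu : Summable (fun n => (|k| + 1) * ((1 + wv a n ^ 2) * (‖c n‖ + ‖d n‖))) :=
    h1.mul_left _
  exact hasFDerivAt_tsum hu (fun n x => tm_hasFDerivAt k a c d n x)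
    (fun n x => norm_tm'_le' k a c d n x)
    (tm_summable k a c d (sm0 k a c d h1) p) p

lemma tm'_summable (k a : ℝ) (c d : ℤ → ℂ)
    (h1 : Summable (fun n => (1 + wv a n ^ 2) * (‖c n‖ + ‖d n‖))) (p : ℝ × ℝ) :
    Summable (fun n => tm' k a c d n p) :=
  Summable.of_norm_bounded (h1.mul_left (|k| + 1)) (fun n => norm_tm'_le' k a c d n p)

lemma GG_eval (k a : ℝ) (c d : ℤ → ℂ)
    (h1 : Summable (fun n => (1 + wv a n ^ 2) * (‖c n‖ + ‖d n‖))) (p : ℝ × ℝ) (v : ℝ × ℝ) :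
    fderiv ℝ (GG k a c d) p v = ∑' n, tm' k a c d n p v := by
  rw [(GG_hasFDerivAt k a c d h1 p).fderiv]
  exact ((ContinuousLinearMap.apply ℝ ℂ v).map_tsum (tm'_summable k a c d h1 p))

lemma GG_cdx (k a : ℝ) (c d : ℤ → ℂ)
    (h1 : Summable (fun n => (1 + wv a n ^ 2) * (‖c n‖ + ‖d n‖))) (p : ℝ × ℝ) :
    cdx (GG k a c d) p
      = GG k a (fun n => Complex.I * k * c n) (fun n => Complex.I * k * d n) p := by
  rw [cdx, GG_eval k a c d h1 p (1, 0), GG]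
  congr 1
  funext n
  simp only [tm', tm, ContinuousLinearMap.add_apply, ContinuousLinearMap.smulRight_apply,
    ContinuousLinearMap.coe_fst', ContinuousLinearMap.coe_snd', smul_eq_mul,
    Complex.real_smul]
  push_cast
  ring

lemma GG_cdy (k a : ℝ) (c d : ℤ → ℂ)
    (h1 : Summable (fun n => (1 + wv a n ^ 2) * (‖c n‖ + ‖d n‖))) (p : ℝ × ℝ) :
    cdy (GG k a c d) p
      = GG k a (fun n => -((wv a n : ℂ)) * d n) (fun n => (wv a n : ℂ) * c n) p := by
  rw [cdy, GG_eval k a c d h1 p (0, 1), GG]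
  congr 1
  funext n
  simp only [tm', tm, ContinuousLinearMap.add_apply, ContinuousLinearMap.smulRight_apply,
    ContinuousLinearMap.coe_fst', ContinuousLinearMap.coe_snd', smul_eq_mul,
    Complex.real_smul]
  push_cast
  ring

lemma GG_congr (k a : ℝ) (c d c' d' : ℤ → ℂ) (hc : ∀ n, c n = c' n) (hd : ∀ n, d n = d' n)
    (p : ℝ × ℝ) : GG k a c d p = GG k a c' d' p := by
  unfold GG; exact tsum_congr fun n => by rw [tm, tm, hc n, hd n]

lemma GG_add (k a : ℝ) (c d c' d' : ℤ → ℂ)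
    (h : Summable (fun n => ‖c n‖ + ‖d n‖)) (h' : Summable (fun n => ‖c' n‖ + ‖d' n‖))
    (p : ℝ × ℝ) :
    GG k a c d p + GG k a c' d' p = GG k a (fun n => c n + c' n) (fun n => d n + d' n) p := by
  unfold GG
  rw [← Summable.tsum_add (tm_summable k a c d h p) (tm_summable k a c' d' h' p)]
  exact tsum_congr fun n => by rw [tm, tm, tm]; ring

lemma sm1_of_sm2 (a : ℝ) (c d : ℤ → ℂ)
    (h2 : Summable (fun n => (1 + wv a n ^ 2) ^ 2 * (‖c n‖ + ‖d n‖))) :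
    Summable (fun n => (1 + wv a n ^ 2) * (‖c n‖ + ‖d n‖)) := by
  refine h2.of_nonneg_of_le (fun n => by positivity) (fun n => ?_)
  have : (0:ℝ) ≤ ‖c n‖ + ‖d n‖ := by positivity
  refine mul_le_mul_of_nonneg_right ?_ this
  nlinarith [sq_nonneg (wv a n), sq_nonneg (wv a n ^ 2)]

lemma GG_lap (k a : ℝ) (c d : ℤ → ℂ)
    (h2 : Summable (fun n => (1 + wv a n ^ 2) ^ 2 * (‖c n‖ + ‖d n‖))) (p : ℝ × ℝ) :
    clap (GG k a c d) p + GG k a c d p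
      = GG k a (fun n => ((1 - k ^ 2 - wv a n ^ 2 : ℝ) : ℂ) * c n)
          (fun n => ((1 - k ^ 2 - wv a n ^ 2 : ℝ) : ℂ) * d n) p := by
  have h1 : Summable (fun n => (1 + wv a n ^ 2) * (‖c n‖ + ‖d n‖)) := sm1_of_sm2 a c d h2
  -- x-direction
  set c1 : ℤ → ℂ := fun n => Complex.I * k * c n with hc1
  set d1 : ℤ → ℂ := fun n => Complex.I * k * d n with hd1
  have h1x : Summable (fun n => (1 + wv a n ^ 2) * (‖c1 n‖ + ‖d1 n‖)) := by
    refine Summable.congr (h1.mul_left (‖Complex.I * (k:ℂ)‖)) (fun n => ?_)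
    simp only [hc1, hd1, norm_mul]
    ring
  have ex1 : cdx (GG k a c d) = GG k a c1 d1 := funext (GG_cdx k a c d h1)
  have ex2 : cdx (cdx (GG k a c d)) p = GG k a (fun n => Complex.I * k * c1 n)
      (fun n => Complex.I * k * d1 n) p := by
    rw [ex1]; exact GG_cdx k a c1 d1 h1x p
  -- y-direction
  set c2 : ℤ → ℂ := fun n => -((wv a n : ℂ)) * d n with hc2
  set d2 : ℤ → ℂ := fun n => (wv a n : ℂ) * c n with hd2
  have h1y : Summable (fun n => (1 + wv a n ^ 2) * (‖c2 n‖ + ‖d2 n‖)) := by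
    refine h2.of_nonneg_of_le (fun n => by positivity) (fun n => ?_)
    simp only [hc2, hd2, norm_mul, norm_neg, Complex.norm_real, Real.norm_eq_abs]
    have hw := w_le a n
    have h0 : (0:ℝ) ≤ ‖c n‖ + ‖d n‖ := by positivity
    have hw0 := abs_nonneg (wv a n)
    have h1w : (0:ℝ) ≤ 1 + wv a n ^ 2 := by positivity
    calc (1 + wv a n ^ 2) * (|wv a n| * ‖d n‖ + |wv a n| * ‖c n‖)
        = (1 + wv a n ^ 2) * |wv a n| * (‖c n‖ + ‖d n‖) := by ring
      _ ≤ (1 + wv a n ^ 2) * (1 + wv a n ^ 2) * (‖c n‖ + ‖d n‖) := by gcongr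
      _ = (1 + wv a n ^ 2) ^ 2 * (‖c n‖ + ‖d n‖) := by ring
  have ey1 : cdy (GG k a c d) = GG k a c2 d2 := funext (GG_cdy k a c d h1)
  have ey2 : cdy (cdy (GG k a c d)) p = GG k a (fun n => -((wv a n : ℂ)) * d2 n)
      (fun n => (wv a n : ℂ) * c2 n) p := by
    rw [ey1]; exact GG_cdy k a c2 d2 h1y p
  -- combine
  rw [clap, ex2, ey2]
  have sA : Summable (fun n => ‖Complex.I * k * c1 n‖ + ‖Complex.I * k * d1 n‖) := by
    refine Summable.congr ((sm0 k a c d h1).mul_left (‖Complex.I * (k:ℂ)‖ * ‖Complex.I * (k:ℂ)‖)) (fun n => ?_)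
    simp only [hc1, hd1, norm_mul]; ring
  have sB : Summable (fun n => ‖-((wv a n : ℂ)) * d2 n‖ + ‖(wv a n : ℂ) * c2 n‖) := by
    refine h2.of_nonneg_of_le (fun n => by positivity) (fun n => ?_)
    simp only [hc2, hd2, norm_mul, norm_neg, Complex.norm_real, Real.norm_eq_abs]
    have h0 : (0:ℝ) ≤ ‖c n‖ + ‖d n‖ := by positivity
    nlinarith [_root_.sq_abs (wv a n), sq_nonneg (wv a n), abs_nonneg (wv a n),
      mul_nonneg (sq_nonneg (wv a n)) h0, mul_nonneg (sq_nonneg (wv a n ^ 2)) h0,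
      mul_nonneg (norm_nonneg (c n)) (sq_nonneg (wv a n)),
      mul_nonneg (norm_nonneg (d n)) (sq_nonneg (wv a n))]
  rw [add_assoc, GG_add k a _ _ c d sB (sm0 k a c d h1), GG_add k a _ _ _ _ sA ?_]
  · refine GG_congr k a _ _ _ _ (fun n => ?_) (fun n => ?_) p <;>
    · simp only [hc1, hd1, hc2, hd2]
      push_cast
      ring_nf
      rw [Complex.I_sq]
      ring
  · refine (sB.add (sm0 k a c d h1)).of_nonneg_of_le (fun n => by positivity) (fun n => ?_)
    have := norm_add_le (-((wv a n : ℂ)) * d2 n) (c n)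
    have := norm_add_le ((wv a n : ℂ) * c2 n) (d n)
    linarith

theorem stmt_16 (k a : ℝ) (hk : 0 < k) (ha1 : 0 < a) (ha2 : a < 1)
    (β : ℤ → ℝ) (hβ : ∀ n : ℤ, β n = k ^ 2 + ((n : ℝ) + a) ^ 2)
    (φs : ℤ → ℝ)
    (hdec : ∀ m : ℕ, Summable (fun n : ℤ => (β n) ^ m * |φs n|))
    (ψs : ℝ × ℝ → ℂ)
    (hψs : ∀ p : ℝ × ℝ, ψs p = Complex.exp (Complex.I * k * p.1) *
      ∑' n : ℤ, Complex.I ^ n * (φs n : ℂ) * (Real.sin (((n : ℝ) + a) * p.2) : ℂ))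
    (g : ℝ × ℝ → ℂ) (hg : ∀ p : ℝ × ℝ, g p = (Real.cos p.2 : ℂ) * cdx ψs p) :
    ∀ p : ℝ × ℝ,
      clap g p + g p
        = ((k : ℂ) / 2) * Complex.exp (Complex.I * k * p.1) *
            ∑' n : ℤ, Complex.I ^ n * ((β n - 1 : ℝ) : ℂ) *
              ((φs (n + 1) - φs (n - 1) : ℝ) : ℂ) *
              (Real.sin (((n : ℝ) + a) * p.2) : ℂ) := by
  -- basic summability facts
  have sumw : ∀ m : ℕ, Summable (fun n : ℤ => (1 + wv a n ^ 2) ^ m * |φs n|) := by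
    intro m
    set C : ℝ := max 1 (k ^ 2)⁻¹ with hC
    have hC1 : (1:ℝ) ≤ C := le_max_left _ _
    have hCk : (k ^ 2)⁻¹ ≤ C := le_max_right _ _
    refine ((hdec m).mul_left (C ^ m)).of_nonneg_of_le (fun n => by positivity) (fun n => ?_)
    have hb : 1 + wv a n ^ 2 ≤ C * β n := by
      have hk2 : (0:ℝ) < k ^ 2 := by positivity
      have h1 : (1:ℝ) ≤ C * k ^ 2 := by
        rcases le_total 1 (k ^ 2) with h | h
        · calc (1:ℝ) ≤ k ^ 2 := h
            _ = 1 * k ^ 2 := (one_mul _).symm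
            _ ≤ C * k ^ 2 := mul_le_mul_of_nonneg_right hC1 (le_of_lt hk2)
        · calc (1:ℝ) = (k ^ 2)⁻¹ * k ^ 2 := (inv_mul_cancel₀ (ne_of_gt hk2)).symm
            _ ≤ C * k ^ 2 := mul_le_mul_of_nonneg_right hCk (le_of_lt hk2)
      have h2 : wv a n ^ 2 ≤ C * wv a n ^ 2 := le_mul_of_one_le_left (sq_nonneg _) hC1
      have : 1 + wv a n ^ 2 ≤ C * (k ^ 2 + wv a n ^ 2) := by
        calc 1 + wv a n ^ 2 ≤ C * k ^ 2 + C * wv a n ^ 2 := add_le_add h1 h2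
          _ = C * (k ^ 2 + wv a n ^ 2) := by ring
      rw [hβ n]
      exact this
    calc (1 + wv a n ^ 2) ^ m * |φs n| ≤ (C * β n) ^ m * |φs n| := by
          apply mul_le_mul_of_nonneg_right _ (abs_nonneg _)
          apply pow_le_pow_left₀ (by positivity) hb
      _ = C ^ m * (β n ^ m * |φs n|) := by ring
  have sshift : ∀ j : ℤ, Summable (fun n : ℤ => (1 + wv a n ^ 2) ^ 2 * |φs (n + j)|) := by
    intro j
    have hG : Summable (fun m : ℤ => (1 + wv a (m - j) ^ 2) ^ 2 * |φs m|) := by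
      refine ((sumw 2).mul_left ((2 + 2 * (j:ℝ) ^ 2) ^ 2)).of_nonneg_of_le
        (fun n => by positivity) (fun n => ?_)
      have hw : wv a (n - j) = wv a n - (j:ℝ) := by unfold wv; push_cast; ring
      have hb : 1 + wv a (n - j) ^ 2 ≤ (2 + 2 * (j:ℝ) ^ 2) * (1 + wv a n ^ 2) := by
        rw [hw]; nlinarith [sq_nonneg (wv a n + (j:ℝ)), sq_nonneg (wv a n),
          sq_nonneg (j:ℝ), sq_nonneg ((j:ℝ) * wv a n)]
      calc (1 + wv a (n - j) ^ 2) ^ 2 * |φs n|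
          ≤ ((2 + 2 * (j:ℝ) ^ 2) * (1 + wv a n ^ 2)) ^ 2 * |φs n| := by
            apply mul_le_mul_of_nonneg_right _ (abs_nonneg _)
            apply pow_le_pow_left₀ (by positivity) hb
        _ = (2 + 2 * (j:ℝ) ^ 2) ^ 2 * ((1 + wv a n ^ 2) ^ 2 * |φs n|) := by ring
    have := ((Equiv.addRight j).summable_iff (f := fun m : ℤ => (1 + wv a (m - j) ^ 2) ^ 2 * |φs m|)).mpr hG
    refine this.congr (fun n => ?_)
    simp only [Function.comp, Equiv.coe_addRight]
    rw [add_sub_cancel_right]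
  set z : ℤ → ℂ := fun _ => 0 with hz
  set c0 : ℤ → ℂ := fun n => Complex.I ^ n * (φs n : ℂ) with hc0
  have hc0n : ∀ n : ℤ, ‖c0 n‖ = |φs n| := by
    intro n
    rw [hc0]
    rw [norm_mul, norm_zpow, Complex.norm_I, one_zpow, one_mul, Complex.norm_real,
      Real.norm_eq_abs]
  have hs : ∀ m : ℕ, Summable (fun n : ℤ => (1 + wv a n ^ 2) ^ m * (‖c0 n‖ + ‖z n‖)) := by
    intro m
    refine (sumw m).congr fun n => ?_
    rw [hc0n n]
    simp [hz]
  have h1s : Summable (fun n : ℤ => (1 + wv a n ^ 2) * (‖c0 n‖ + ‖z n‖)) :=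
    (hs 1).congr fun n => by rw [pow_one]
  have hψeq : ψs = GG k a c0 z := by
    funext p
    have ht : ∀ n : ℤ, tm k a c0 z n p
        = Complex.exp (Complex.I * k * p.1) *
          (Complex.I ^ n * (φs n : ℂ) * (Real.sin (wv a n * p.2) : ℂ)) := by
      intro n
      rw [tm]
      simp only [hz, hc0]
      ring
    rw [hψs p, GG, tsum_congr ht, tsum_mul_left]
    rfl
  set c1 : ℤ → ℂ := fun n => Complex.I * k * c0 n with hc1
  have hcdx : ∀ p : ℝ × ℝ, cdx ψs p = GG k a c1 z p := by
    intro p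
    rw [hψeq, GG_cdx k a c0 z h1s p]
    exact GG_congr k a _ _ c1 z (fun n => rfl) (fun n => by simp [hz]) p
  have sφ : Summable (fun n : ℤ => |φs n|) :=
    (sumw 0).congr fun n => by rw [pow_zero, one_mul]
  set cg : ℤ → ℂ := fun n => ((k:ℂ)/2) * Complex.I ^ n * ((φs (n-1) : ℂ) - (φs (n+1) : ℂ))
    with hcg
  have hc1n : ∀ n : ℤ, ‖c1 n‖ = k * |φs n| := by
    intro n
    rw [hc1, norm_mul, norm_mul, Complex.norm_I, one_mul, Complex.norm_real, Real.norm_eq_abs,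
      hc0n, abs_of_pos hk]
  have hgeq : g = GG k a cg z := by
    funext p
    set h1 : ℤ → ℂ := fun n => Complex.exp (Complex.I * k * p.1) *
      ((1/2 : ℂ) * c1 n * (Real.sin (wv a (n+1) * p.2) : ℂ)) with hh1
    set h2 : ℤ → ℂ := fun n => Complex.exp (Complex.I * k * p.1) *
      ((1/2 : ℂ) * c1 n * (Real.sin (wv a (n-1) * p.2) : ℂ)) with hh2
    have hbnd : ∀ (j n : ℤ), ‖Complex.exp (Complex.I * k * p.1) *
        ((1/2 : ℂ) * c1 n * (Real.sin (wv a (n+j) * p.2) : ℂ))‖ ≤ k/2 * |φs n| := by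
      intro j n
      rw [norm_mul, norm_exp_Ik, one_mul, norm_mul]
      refine (mul_le_of_le_one_right (by positivity)
        (by rw [Complex.norm_real]; exact Real.abs_sin_le_one _)).trans ?_
      rw [norm_mul, hc1n]
      have : ‖(1/2 : ℂ)‖ = 1/2 := by
        rw [show (1/2 : ℂ) = ((1/2 : ℝ) : ℂ) by norm_num, Complex.norm_real]
        norm_num
      rw [this]
      ring_nf
      exact le_refl _
    have s1 : Summable h1 := Summable.of_norm_bounded (sφ.mul_left (k/2))
      (fun n => hbnd 1 n)
    have s2 : Summable h2 := Summable.of_norm_bounded (sφ.mul_left (k/2))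
      (fun n => by simpa only [hh2, sub_eq_add_neg] using hbnd (-1) n)
    have step1 : g p = ∑' n : ℤ, (h1 n + h2 n) := by
      rw [hg, hcdx, GG, ← tsum_mul_left]
      refine tsum_congr fun n => ?_
      have e1 : wv a (n+1) * p.2 = wv a n * p.2 + p.2 := by unfold wv; push_cast; ring
      have e2 : wv a (n-1) * p.2 = wv a n * p.2 - p.2 := by unfold wv; push_cast; ring
      have hr : Real.cos p.2 * Real.sin (wv a n * p.2)
          = (Real.sin (wv a (n+1) * p.2) + Real.sin (wv a (n-1) * p.2))/2 := by
        rw [e1, e2, Real.sin_add, Real.sin_sub]; ring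
      have hrc := congrArg (fun t : ℝ => (t : ℂ)) hr
      push_cast at hrc
      rw [tm, hh1, hh2]
      simp only [hz]
      rw [zero_mul, add_zero]
      push_cast
      linear_combination (Complex.exp (Complex.I * k * p.1) * c1 n) * hrc
    have s1' : Summable (fun m : ℤ => h1 (m - 1)) :=
      ((Equiv.subRight (1:ℤ)).summable_iff (f := h1)).mpr s1
    have s2' : Summable (fun m : ℤ => h2 (m + 1)) :=
      ((Equiv.addRight (1:ℤ)).summable_iff (f := h2)).mpr s2
    have r1 : ∑' n : ℤ, h1 n = ∑' m : ℤ, h1 (m - 1) :=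
      ((Equiv.subRight (1:ℤ)).tsum_eq h1).symm
    have r2 : ∑' n : ℤ, h2 n = ∑' m : ℤ, h2 (m + 1) :=
      ((Equiv.addRight (1:ℤ)).tsum_eq h2).symm
    rw [step1, Summable.tsum_add s1 s2, r1, r2, ← Summable.tsum_add s1' s2', GG]
    refine tsum_congr fun m => ?_
    have i1 : (m : ℤ) - 1 + 1 = m := by ring
    have i2 : (m : ℤ) + 1 - 1 = m := by ring
    rw [hh1, hh2]
    simp only []
    rw [i1, i2, tm]
    simp only [hz]
    rw [zero_mul, add_zero]
    have ep : Complex.I ^ (m+1) = Complex.I ^ m * Complex.I :=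
      zpow_add_one₀ Complex.I_ne_zero m
    have em : Complex.I ^ (m-1) = Complex.I ^ m * Complex.I⁻¹ :=
      zpow_sub_one₀ Complex.I_ne_zero m
    rw [Complex.inv_I] at em
    simp only [hc1, hc0, hcg]
    rw [em, ep]
    push_cast
    linear_combination (((k:ℂ)/2) * Complex.I ^ m * ((φs (m+1) : ℂ) - (φs (m-1) : ℂ)) *
      Complex.exp (Complex.I * k * p.1) * Complex.sin ((wv a m : ℂ) * (p.2 : ℂ))) * Complex.I_sq
  have hcg2 : Summable (fun n : ℤ => (1 + wv a n ^ 2) ^ 2 * (‖cg n‖ + ‖z n‖)) := by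
    refine (((sshift (-1)).add (sshift 1)).mul_left (k/2)).of_nonneg_of_le
      (fun n => by positivity) (fun n => ?_)
    have hnorm : ‖cg n‖ ≤ k/2 * (|φs (n - 1)| + |φs (n + 1)|) := by
      simp only [hcg]
      rw [norm_mul, norm_mul, norm_zpow, Complex.norm_I, one_zpow, mul_one]
      have h12 : ‖(k:ℂ)/2‖ = k/2 := by
        rw [show ((k:ℂ)/2) = ((k/2 : ℝ):ℂ) by push_cast; ring, Complex.norm_real,
          Real.norm_eq_abs, abs_of_pos (by positivity)]
      rw [h12]
      refine mul_le_mul_of_nonneg_left ?_ (by positivity)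
      rw [show ((φs (n-1) : ℂ) - (φs (n+1) : ℂ)) = (((φs (n-1) - φs (n+1) : ℝ)) : ℂ) by
        push_cast; ring, Complex.norm_real, Real.norm_eq_abs]
      calc |φs (n-1) - φs (n+1)| ≤ |φs (n-1)| + |φs (n+1)| := abs_sub _ _
        _ = _ := rfl
    calc (1 + wv a n ^ 2) ^ 2 * (‖cg n‖ + ‖z n‖)
        = (1 + wv a n ^ 2) ^ 2 * ‖cg n‖ := by simp [hz]
      _ ≤ (1 + wv a n ^ 2) ^ 2 * (k/2 * (|φs (n - 1)| + |φs (n + 1)|)) :=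
          mul_le_mul_of_nonneg_left hnorm (by positivity)
      _ = k/2 * ((1 + wv a n ^ 2) ^ 2 * |φs (n + (-1))| + (1 + wv a n ^ 2) ^ 2 * |φs (n + 1)|) := by
          rw [show n - 1 = n + (-1) by ring]; ring
  intro p
  rw [hgeq, GG_lap k a cg z hcg2 p]
  have ht : ∀ n : ℤ, tm k a (fun n => ((1 - k ^ 2 - wv a n ^ 2 : ℝ) : ℂ) * cg n)
      (fun n => ((1 - k ^ 2 - wv a n ^ 2 : ℝ) : ℂ) * z n) n p
      = Complex.exp (Complex.I * k * p.1) * (((k:ℂ)/2) * (Complex.I ^ n * ((β n - 1 : ℝ) : ℂ) *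
          ((φs (n + 1) - φs (n - 1) : ℝ) : ℂ) * (Real.sin (((n:ℝ) + a) * p.2) : ℂ))) := by
    intro n
    rw [tm]
    simp only [hz, hcg, mul_zero, zero_mul, add_zero, wv]
    rw [hβ n]
    push_cast
    ring
  rw [GG, tsum_congr ht, tsum_mul_left, tsum_mul_left]
  ring
end

section
/- Let β₀ < 1 < βₙ (n ≠ 0) and suppose (φₙ) solves 2(1+λ)βₙ(σ+λ+βₙ)φₙ = Rk((βₙ₊₁−1)φₙ₊₁ − (βₙ₋₁−1)φₙ₋₁) with σ + λ + β₀ > 0, R, k > 0, λ ≥ 0, and ∑ βₙ²φₙ² < ∞, φ not identically zero. Then φ₀ ≠ 0. -/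
theorem stmt_19 (k lam R σ : ℝ) (N j : ℤ) (hk : 0 < k) (hN : 2 ≤ N)
    (hj1 : 1 ≤ j) (hj2 : j ≤ N - 1) (hlam : 0 ≤ lam) (hR : 0 < R)
    (β : ℤ → ℝ) (hβ : ∀ n : ℤ, β n = k ^ 2 + ((n : ℝ) + (j : ℝ) / (2 * N)) ^ 2)
    (hβ0 : β 0 < 1) (hβn : ∀ n : ℤ, n ≠ 0 → 1 < β n)
    (hσ : 0 < σ + lam + β 0)
    (φ : ℤ → ℝ) (hne : φ ≠ 0)
    (hsum : Summable (fun n : ℤ => (β n) ^ 2 * (φ n) ^ 2))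
    (hrec : ∀ n : ℤ, 2 * (1 + lam) * β n * (σ + lam + β n) * φ n
      = R * k * ((β (n + 1) - 1) * φ (n + 1) - (β (n - 1) - 1) * φ (n - 1))) :
    φ 0 ≠ 0 := by
  intro hφ0
  have h1l : (0:ℝ) < 1 + lam := by linarith
  have hβpos : ∀ n : ℤ, 0 < β n := by
    intro n; rw [hβ n]; positivity
  have hβk : ∀ n : ℤ, k ^ 2 ≤ β n := by
    intro n; rw [hβ n]; nlinarith [sq_nonneg ((n : ℝ) + (j : ℝ) / (2 * N))]
  set a : ℤ → ℝ := fun n => (β n - 1) * φ n with ha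
  -- summability of φ²
  have hφsq : Summable (fun n : ℤ => (φ n) ^ 2) := by
    apply Summable.of_nonneg_of_le (fun n => sq_nonneg _) (fun n => ?_)
      (hsum.mul_left (1 / k ^ 4))
    have h1 := hβk n
    have h2 : k ^ 4 ≤ (β n) ^ 2 := by nlinarith [sq_nonneg k, hk.le]
    have h3 : (0:ℝ) < k ^ 4 := by positivity
    rw [one_div, inv_mul_eq_div, le_div_iff₀ h3]
    nlinarith [mul_le_mul_of_nonneg_right h2 (sq_nonneg (φ n))]
  -- summability of a²
  have hA2 : Summable (fun n : ℤ => (a n) ^ 2) := by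
    apply Summable.of_nonneg_of_le (fun n => sq_nonneg _) (fun n => ?_)
      ((hsum.mul_left 2).add (hφsq.mul_left 2))
    simp only [ha]
    nlinarith [sq_nonneg (β n + 1), sq_nonneg (φ n), sq_nonneg ((β n + 1) * φ n)]
  have hA2p : Summable (fun n : ℤ => (a (n + 1)) ^ 2) := by
    have := ((Equiv.addRight (1:ℤ)).summable_iff (f := fun n : ℤ => (a n) ^ 2)).mpr hA2
    simpa [Function.comp_def] using this
  have hA2m : Summable (fun n : ℤ => (a (n - 1)) ^ 2) := by
    have := ((Equiv.subRight (1:ℤ)).summable_iff (f := fun n : ℤ => (a n) ^ 2)).mpr hA2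
    simpa [Function.comp_def] using this
  have habs : ∀ (f : ℤ → ℝ), Summable (fun n => (f n) ^ 2) →
      Summable (fun n : ℤ => a n * f n) := by
    intro f hf
    rw [← summable_abs_iff]
    apply Summable.of_nonneg_of_le (fun n => abs_nonneg _) (fun n => ?_)
      ((hA2.add hf).mul_left (1 / 2))
    rw [abs_mul]
    nlinarith [sq_abs (a n), sq_abs (f n), sq_nonneg (|a n| - |f n|)]
  have hS1 : Summable (fun n : ℤ => a n * a (n + 1)) := habs _ hA2p
  have hS2 : Summable (fun n : ℤ => a n * a (n - 1)) := habs _ hA2m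
  set g : ℤ → ℝ := fun n => R * k * (a n * a (n + 1)) - R * k * (a n * a (n - 1)) with hg
  have hgsum : Summable g := (hS1.mul_left (R * k)).sub (hS2.mul_left (R * k))
  -- tsum g = 0
  have hshift : ∑' n : ℤ, a n * a (n - 1) = ∑' n : ℤ, a n * a (n + 1) := by
    have := (Equiv.addRight (1:ℤ)).tsum_eq (f := fun n : ℤ => a n * a (n - 1))
    simp only [Equiv.coe_addRight, add_sub_cancel_right] at this
    rw [← this]
    exact tsum_congr fun n => mul_comm _ _
  have htsum0 : ∑' n : ℤ, g n = 0 := by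
    rw [hg]
    rw [Summable.tsum_sub (hS1.mul_left (R * k)) (hS2.mul_left (R * k)),
      tsum_mul_left, tsum_mul_left, hshift]
    ring
  -- pointwise identity
  have hgn : ∀ n : ℤ, g n = 2 * (1 + lam) * β n * (σ + lam + β n) * (β n - 1) * (φ n) ^ 2 := by
    intro n
    have h := hrec n
    simp only [hg, ha]
    linear_combination (-((β n - 1) * φ n)) * h
  -- nonnegativity
  have hnn : ∀ n : ℤ, 0 ≤ g n := by
    intro n
    rw [hgn n]
    by_cases hn : n = 0
    · subst hn; rw [hφ0]; simp
    · have hb := hβn n hn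
      have hs : 0 < σ + lam + β n := by linarith
      have hbp := hβpos n
      have hc : 0 < 2 * (1 + lam) * β n * (σ + lam + β n) * (β n - 1) :=
        mul_pos (mul_pos (by positivity) hs) (by linarith)
      exact mul_nonneg hc.le (sq_nonneg _)
  have hzero : ∀ n : ℤ, g n = 0 := by
    intro n
    have hle : g n ≤ ∑' m : ℤ, g m := Summable.le_tsum hgsum n (fun i _ => hnn i)
    rw [htsum0] at hle
    exact le_antisymm hle (hnn n)
  -- conclude φ = 0
  apply hne
  funext n
  by_cases hn : n = 0
  · subst hn; exact hφ0
  · have hb := hβn n hn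
    have hs : 0 < σ + lam + β n := by linarith
    have hbp := hβpos n
    have h0 := hzero n
    rw [hgn n] at h0
    have hc : 0 < 2 * (1 + lam) * β n * (σ + lam + β n) * (β n - 1) :=
      mul_pos (mul_pos (by positivity) hs) (by linarith)
    have : (φ n) ^ 2 = 0 := by
      by_contra hq
      have : 0 < (φ n) ^ 2 := lt_of_le_of_ne (sq_nonneg _) (Ne.symm hq)
      nlinarith
    exact pow_eq_zero_iff (by norm_num) |>.mp this
end
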